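/- arXiv:2303.02791 — 4 statements merged into one kernel-verified Lean document; each statement's English description precedes it below -/
import Mathlib

section
/- Let G be a finite simple graph with vertex set {x_1,...,x_n} and let x be a vertex of G. Then for every integer s ≥ 1, I(G)^{s} + (x) = I(G\x)^{s} + (x), where G\x is the graph obtained by deleting the vertex x and all edges incident to it, and the edge ideal of G\x is regarded as an ideal of the same polynomial ring S. -/
open MvPolynomial

noncomputable section

/-! Generalities on graded pieces, Betti numbers and Castelnuovo–Mumford regularity
of homogeneous ideals in a polynomial ring, via the Koszul complex. -/

variable (K : Type) [Field K] (n : ℕ)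

/-- The degree `d` graded piece of an ideal `I ⊆ K[x_1, …, x_n]`, as a `K`-subspace
(`⊥` for negative `d`). -/
def degPiece (I : Ideal (MvPolynomial (Fin n) K)) (d : ℤ) :
    Submodule K (MvPolynomial (Fin n) K) :=
  if 0 ≤ d then (Submodule.restrictScalars K I) ⊓ homogeneousSubmodule (Fin n) K d.toNat
  else ⊥

theorem mulX_mem (I : Ideal (MvPolynomial (Fin n) K)) (k : Fin n) (d : ℤ)
    {x : MvPolynomial (Fin n) K} (hx : x ∈ degPiece K n I d) :
    (X k : MvPolynomial (Fin n) K) * x ∈ degPiece K n I (d + 1) := by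
  by_cases h : 0 ≤ d
  · rw [degPiece, if_pos h, Submodule.mem_inf] at hx
    rw [degPiece, if_pos (by omega : (0:ℤ) ≤ d + 1), Submodule.mem_inf]
    constructor
    · exact Ideal.mul_mem_left I _ hx.1
    · rw [mem_homogeneousSubmodule]
      have h2 := (isHomogeneous_X K k).mul ((mem_homogeneousSubmodule _ _).1 hx.2)
      have h3 : (d + 1).toNat = 1 + d.toNat := by omega
      rw [h3]
      exact h2
  · rw [degPiece, if_neg h, Submodule.mem_bot] at hx
    subst hx
    rw [mul_zero]
    exact Submodule.zero_mem _

/-- Multiplication by the variable `x_k`, as a map between graded pieces. -/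
def mulXmap (I : Ideal (MvPolynomial (Fin n) K)) (k : Fin n) (d e : ℤ) (h : e = d + 1) :
    degPiece K n I d →ₗ[K] degPiece K n I e :=
  LinearMap.restrict (LinearMap.mulLeft K (X k)) (by
    intro x hx
    subst h
    simpa using mulX_mem K n I k d hx)

/-- The differential, in internal degree `j`, of the complex obtained by tensoring the
ideal `I` with the Koszul complex on `x_1, …, x_n`; its homology computes
`Tor_i(I, K)_j`, whose dimension is the graded Betti number `β_{i,j}(I)`. -/
def koszulD (I : Ideal (MvPolynomial (Fin n) K)) (j i : ℕ) :
    ({T : Finset (Fin n) // T.card = i + 1} → degPiece K n I ((j : ℤ) - (i + 1)))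
      →ₗ[K] ({T : Finset (Fin n) // T.card = i} → degPiece K n I ((j : ℤ) - i)) :=
  LinearMap.pi fun T => ∑ k : Fin n,
    if h : k ∈ T.1 then 0
    else ((-1 : K) ^ (T.1.filter (fun l => l < k)).card) •
      ((mulXmap K n I k ((j : ℤ) - (i + 1)) ((j : ℤ) - i) (by ring)).comp
        (LinearMap.proj (⟨insert k T.1, by
          rw [Finset.card_insert_of_notMem h, T.2]⟩ : {T : Finset (Fin n) // T.card = i + 1})))

/-- The cycles of the (internal degree `j`) Koszul complex of `I` in homological degree `i`. -/
def kerChain (I : Ideal (MvPolynomial (Fin n) K)) (j : ℕ) :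
    (i : ℕ) → Submodule K ({T : Finset (Fin n) // T.card = i} → degPiece K n I ((j : ℤ) - i))
  | 0 => ⊤
  | (i + 1) => LinearMap.ker (koszulD K n I j i)

/-- The graded Betti number `β_{i,j}(I) = dim_K Tor_i(I, K)_j`. -/
def betti (I : Ideal (MvPolynomial (Fin n) K)) (i j : ℕ) : ℕ :=
  Module.finrank K (kerChain K n I j i) -
    Module.finrank K
      ((LinearMap.range (koszulD K n I j i) ⊓ kerChain K n I j i) : Submodule K _)

/-- The Castelnuovo–Mumford regularity `reg(I) = max { j - i | β_{i,j}(I) ≠ 0 }`. -/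
def reg (I : Ideal (MvPolynomial (Fin n) K)) : ℤ :=
  sSup {r : ℤ | ∃ i j : ℕ, betti K n I i j ≠ 0 ∧ r = (j : ℤ) - i}

/-- The squarefree part of a monomial ideal: the ideal generated by the squarefree
monomials belonging to it. -/
def sqfreePart (I : Ideal (MvPolynomial (Fin n) K)) : Ideal (MvPolynomial (Fin n) K) :=
  Ideal.span {m | m ∈ I ∧ ∃ A : Finset (Fin n), m = ∏ v ∈ A, X v}

/-- The `s`-th symbolic power of a (squarefree monomial) ideal:
the intersection of the `s`-th powers of its minimal primes; `S` for `s ≤ 0`. -/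
def symbPow (I : Ideal (MvPolynomial (Fin n) K)) (s : ℤ) : Ideal (MvPolynomial (Fin n) K) :=
  if s ≤ 0 then ⊤ else ⨅ p ∈ I.minimalPrimes, p ^ s.toNat

/-- `ssp I s` is `I^{s}`, the squarefree part of the `s`-th symbolic power of `I`. -/
def ssp (I : Ideal (MvPolynomial (Fin n) K)) (s : ℤ) : Ideal (MvPolynomial (Fin n) K) :=
  sqfreePart K n (symbPow K n I s)

/-- `sqPow I s` is `I^[s]`, the squarefree part of the ordinary power `I^s`. -/
def sqPow (I : Ideal (MvPolynomial (Fin n) K)) (s : ℕ) : Ideal (MvPolynomial (Fin n) K) :=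
  sqfreePart K n (I ^ s)

/-- The height of an ideal: the minimum of the heights of its minimal primes. -/
def heightI (I : Ideal (MvPolynomial (Fin n) K)) : ℕ∞ :=
  ⨅ p : I.minimalPrimes, Order.height (⟨p.1, p.2.1.1⟩ : PrimeSpectrum (MvPolynomial (Fin n) K))

/-- The colon ideal `(I : u)`. -/
def colonOf (I : Ideal (MvPolynomial (Fin n) K)) (u : MvPolynomial (Fin n) K) :
    Ideal (MvPolynomial (Fin n) K) :=
  Submodule.colon I (Ideal.span {u})

/-- `u` is a minimal monomial generator of the monomial ideal `I`:
`u` is a monomial belonging to `I` and `u/x_k ∉ I` for every variable `x_k` dividing `u`. -/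
def IsMinGen (I : Ideal (MvPolynomial (Fin n) K)) (u : MvPolynomial (Fin n) K) : Prop :=
  ∃ d : Fin n →₀ ℕ, u = monomial d (1 : K) ∧ u ∈ I ∧
    ∀ k : Fin n, d k ≠ 0 → monomial (d - Finsupp.single k 1) (1 : K) ∉ I

/-! Graph-theoretic notions. -/

/-- The graph obtained from `G` by deleting the vertices in `U` (and all edges meeting `U`),
on the same vertex set. -/
def delVerts (G : SimpleGraph (Fin n)) (U : Set (Fin n)) : SimpleGraph (Fin n) where
  Adj v w := G.Adj v w ∧ v ∉ U ∧ w ∉ U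
  symm := ⟨fun _ _ h => ⟨h.1.symm, h.2.2, h.2.1⟩⟩
  loopless := ⟨fun v h => G.irrefl h.1⟩


/-- The edge ideal `I(G)` of a graph `G` on the vertex set `{x_1, …, x_n}`. -/
def edgeIdeal (G : SimpleGraph (Fin n)) : Ideal (MvPolynomial (Fin n) K) :=
  Ideal.span {m | ∃ v w, G.Adj v w ∧ m = X v * X w}

/-- `a`, `b` enumerate the endpoints of a matching of `G` of size `k`:
the edges `a i b i` are pairwise disjoint edges of `G`. -/
def IsMatching (G : SimpleGraph (Fin n)) (k : ℕ) (a b : Fin k → Fin n) : Prop :=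
  (∀ i, G.Adj (a i) (b i)) ∧
    ∀ i j, i ≠ j → a i ≠ a j ∧ b i ≠ b j ∧ a i ≠ b j

/-- The matching number `match(G)`. -/
def matchNum (G : SimpleGraph (Fin n)) : ℕ :=
  sSup {k | ∃ a b : Fin k → Fin n, IsMatching n G k a b}

/-- An induced matching: a matching such that no edge of `G` other than the matching edges
joins two of its vertices. -/
def IsInducedMatching (G : SimpleGraph (Fin n)) (k : ℕ) (a b : Fin k → Fin n) : Prop :=
  IsMatching n G k a b ∧ ∀ i j, i ≠ j →
    ¬ G.Adj (a i) (a j) ∧ ¬ G.Adj (a i) (b j) ∧ ¬ G.Adj (b i) (a j) ∧ ¬ G.Adj (b i) (b j)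

/-- The induced matching number `ind-match(G)`. -/
def indMatchNum (G : SimpleGraph (Fin n)) : ℕ :=
  sSup {k | ∃ a b : Fin k → Fin n, IsInducedMatching n G k a b}

/-- An ordered matching `{a_i b_i}`: the `a_i` form an independent set and
`a_i b_j ∈ E(G)` implies `i ≤ j`. -/
def IsOrderedMatching (G : SimpleGraph (Fin n)) (k : ℕ) (a b : Fin k → Fin n) : Prop :=
  IsMatching n G k a b ∧ (∀ i j, ¬ G.Adj (a i) (a j)) ∧ ∀ i j, G.Adj (a i) (b j) → i ≤ j

/-- The ordered matching number `ord-match(G)`. -/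
def ordMatchNum (G : SimpleGraph (Fin n)) : ℕ :=
  sSup {k | ∃ a b : Fin k → Fin n, IsOrderedMatching n G k a b}

/-- A graph is chordal if it has no induced cycle of length at least four. -/
def IsChordal (G : SimpleGraph (Fin n)) : Prop :=
  ∀ k : ℕ, 4 ≤ k → ∀ f : ZMod k → Fin n, Function.Injective f →
    ¬ (∀ i j : ZMod k, G.Adj (f i) (f j) ↔ (j = i + 1 ∨ i = j + 1))


/-- The star triangle graph with `t` triangles: vertex `0` is the common vertex of all the
triangles, and for `0 ≤ i < t` the vertices `2i+1`, `2i+2` are the other two vertices of the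
`i`-th triangle. -/
def starTriangle (t : ℕ) : SimpleGraph (Fin (2 * t + 1)) where
  Adj u v := u ≠ v ∧ ((u : ℕ) = 0 ∨ (v : ℕ) = 0 ∨ ((u : ℕ) - 1) / 2 = ((v : ℕ) - 1) / 2)
  symm := by
    constructor
    intro u v h
    exact ⟨h.1.symm, by tauto⟩
  loopless := by constructor; intro u h; exact h.1 rfl

end

section AuxLemmas

variable {K : Type} [Field K] {n : ℕ}

lemma mem_symbPow_iff {I : Ideal (MvPolynomial (Fin n) K)} {s : ℤ} (hs : ¬ s ≤ 0)
    {m : MvPolynomial (Fin n) K} :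
    m ∈ symbPow K n I s ↔ ∀ p ∈ I.minimalPrimes, m ∈ p ^ s.toNat := by
  rw [symbPow, if_neg hs]
  simp [Ideal.mem_iInf]

lemma symbPow_mono {I J : Ideal (MvPolynomial (Fin n) K)} (h : I ≤ J) (s : ℤ) :
    symbPow K n I s ≤ symbPow K n J s := by
  by_cases hs : s ≤ 0
  · rw [symbPow, if_pos hs, symbPow, if_pos hs]
  intro m hm
  rw [mem_symbPow_iff hs] at hm ⊢
  intro p hp
  haveI := hp.1.1
  obtain ⟨q, hq, hqp⟩ := Ideal.exists_minimalPrimes_le (h.trans hp.1.2)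
  exact Ideal.pow_right_mono hqp _ (hm q hq)

lemma sqfreePart_mono {I J : Ideal (MvPolynomial (Fin n) K)} (h : I ≤ J) :
    sqfreePart K n I ≤ sqfreePart K n J :=
  Ideal.span_mono (fun m hm => ⟨h hm.1, hm.2⟩)

end AuxLemmas

/-- For every vertex `x` of `G` and every `s ≥ 1`,
`I(G)^{s} + (x) = I(G \ x)^{s} + (x)`. -/
theorem ssp_add_var_eq_delete_vertex
    (K : Type) [Field K] (n : ℕ) (G : SimpleGraph (Fin n)) (x : Fin n)
    (s : ℕ) (hs : 1 ≤ s) :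
    ssp K n (edgeIdeal K n G) (s : ℤ) + Ideal.span {(X x : MvPolynomial (Fin n) K)} =
      ssp K n (edgeIdeal K n (delVerts n G {x})) (s : ℤ) +
        Ideal.span {(X x : MvPolynomial (Fin n) K)} := by
  set φ : MvPolynomial (Fin n) K →ₐ[K] MvPolynomial (Fin n) K :=
    aeval (fun v => if v = x then 0 else X v) with hφ
  have hsz : ¬ ((s : ℤ) ≤ 0) := by omega
  have hJI : edgeIdeal K n (delVerts n G {x}) ≤ edgeIdeal K n G := by
    apply Ideal.span_mono
    rintro m ⟨v, w, hvw, rfl⟩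
    exact ⟨v, w, hvw.1, rfl⟩
  rw [Ideal.add_eq_sup, Ideal.add_eq_sup]
  apply le_antisymm
  · apply sup_le _ le_sup_right
    rw [ssp, sqfreePart]
    apply Ideal.span_le.2
    rintro m ⟨hm, A, rfl⟩
    by_cases hx : x ∈ A
    · apply Ideal.mem_sup_right
      rw [← Finset.prod_erase_mul A _ hx]
      exact Ideal.mul_mem_left _ _ (Ideal.subset_span rfl)
    · apply Ideal.mem_sup_left
      apply Ideal.subset_span
      refine ⟨?_, A, rfl⟩
      have hfix : φ (∏ v ∈ A, X v) = ∏ v ∈ A, X v := by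
        rw [map_prod]
        refine Finset.prod_congr rfl (fun v hv => ?_)
        have hvx : v ≠ x := fun h => hx (h ▸ hv)
        simp [hφ, hvx]
      rw [mem_symbPow_iff hsz] at hm ⊢
      intro q hq
      haveI := hq.1.1
      have hP : edgeIdeal K n G ≤ Ideal.comap (φ : MvPolynomial (Fin n) K →+* _) q := by
        rw [edgeIdeal]
        apply Ideal.span_le.2
        rintro m ⟨v, w, hvw, rfl⟩
        rw [SetLike.mem_coe, Ideal.mem_comap]
        by_cases hv : v = x
        · simp [hφ, hv]
        by_cases hw : w = x
        · simp [hφ, hw]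
        · have hJm : (X v * X w : MvPolynomial (Fin n) K) ∈
              edgeIdeal K n (delVerts n G {x}) :=
            Ideal.subset_span ⟨v, w, ⟨hvw, by simp [hv], by simp [hw]⟩, rfl⟩
          have := hq.1.2 hJm
          simpa [hφ, hv, hw] using this
      obtain ⟨p, hp, hpq⟩ := Ideal.exists_minimalPrimes_le hP
      have hmem : (∏ v ∈ A, X v) ∈ p ^ (s : ℤ).toNat := hm p hp
      have hmap : φ (∏ v ∈ A, X v) ∈
          Ideal.map (φ : MvPolynomial (Fin n) K →+* _) (p ^ (s : ℤ).toNat) :=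
        Ideal.mem_map_of_mem _ hmem
      rw [hfix, Ideal.map_pow] at hmap
      have hle : Ideal.map (φ : MvPolynomial (Fin n) K →+* _) p ≤ q :=
        le_trans (Ideal.map_mono hpq) Ideal.map_comap_le
      exact Ideal.pow_right_mono hle _ hmap
  · exact sup_le
      (le_trans (sqfreePart_mono (symbPow_mono hJI _)) le_sup_left) le_sup_right
end

section
/- Let G be a finite simple graph and assume that x_1 is a simplicial vertex of G with N_G(x_1) = {x_2,...,x_d} for some integer d ≥ 2. Then for every integer s ≥ 1, the colon ideal (I(G)^{s} : x_1 x_2 ⋯ x_d) equals I(G \ N_G[x_1])^{s−d+1}, where G \ N_G[x_1] is the graph obtained by deleting x_1 and all its neighbors (and all edges meeting them), and by convention I^{t} = S for t ≤ 0. -/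
open MvPolynomial

namespace SspAux

open MvPolynomial

variable {K : Type} [Field K] {n : ℕ}

/-- The exponent vector of the squarefree monomial with support `B`. -/
noncomputable def expB (B : Finset (Fin n)) : Fin n →₀ ℕ := ∑ v ∈ B, Finsupp.single v 1

theorem expB_apply (B : Finset (Fin n)) (v : Fin n) :
    expB B v = if v ∈ B then 1 else 0 := by
  classical
  rw [expB, Finset.sum_apply']
  simp [Finsupp.single_apply]

theorem sum_expB (B C : Finset (Fin n)) : ∑ v ∈ C, expB B v = (B ∩ C).card := by
  classical
  simp only [expB_apply]
  rw [← Finset.sum_filter, Finset.filter_mem_eq_inter, Finset.inter_comm]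
  exact (Finset.card_eq_sum_ones _).symm

theorem prod_X_eq (B : Finset (Fin n)) :
    (∏ v ∈ B, X v : MvPolynomial (Fin n) K) = monomial (expB B) 1 := by
  classical
  induction B using Finset.induction_on with
  | empty => simp [expB]
  | insert a s h ih =>
    rw [Finset.prod_insert h, ih, expB, expB, Finset.sum_insert h,
      show (X a : MvPolynomial (Fin n) K) = monomial (Finsupp.single a 1) 1 from rfl,
      monomial_mul, one_mul]

/-- A (not necessarily minimal) vertex cover. -/
def IsCover (G : SimpleGraph (Fin n)) (C : Finset (Fin n)) : Prop :=
  ∀ ⦃v w : Fin n⦄, G.Adj v w → v ∈ C ∨ w ∈ C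

/-- The monomial prime ideal attached to a set of vertices. -/
noncomputable def PC (K : Type) [Field K] {n : ℕ} (C : Finset (Fin n)) :
    Ideal (MvPolynomial (Fin n) K) :=
  Ideal.span (X '' (C : Set (Fin n)))

theorem PC_isPrime (C : Finset (Fin n)) : (PC K C).IsPrime := by
  classical
  set φ : Fin n → MvPolynomial (Fin n) K := fun v => if v ∈ C then 0 else X v with hφ
  have hker : PC K C =
      RingHom.ker (aeval φ : MvPolynomial (Fin n) K →ₐ[K] MvPolynomial (Fin n) K) := by
    apply le_antisymm
    · rw [PC, Ideal.span_le]
      rintro _ ⟨v, hv, rfl⟩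
      have hvC : v ∈ C := hv
      simp [RingHom.mem_ker, hφ, hvC]
    · intro f hf
      rw [PC, mem_ideal_span_X_image]
      by_contra hcon
      push_neg at hcon
      obtain ⟨m, hm, hmC⟩ := hcon
      have hterm : ∀ a ∈ f.support,
          coeff m ((aeval φ) (monomial a (coeff a f))) = if a = m then coeff a f else 0 := by
        intro a _
        by_cases hac : ∃ i ∈ C, a i ≠ 0
        · obtain ⟨i, hiC, hi⟩ := hac
          have hz : (aeval φ) (monomial a (coeff a f)) = 0 := by
            rw [aeval_monomial]
            have : (a.prod fun v k => φ v ^ k) = 0 := by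
              rw [Finsupp.prod]
              apply Finset.prod_eq_zero (Finsupp.mem_support_iff.mpr hi)
              simp [hφ, hiC, zero_pow hi]
            rw [this, mul_zero]
          have hne : a ≠ m := by
            rintro rfl
            exact hi (hmC i hiC)
          rw [hz, coeff_zero, if_neg hne]
        · push_neg at hac
          have hmon : (aeval φ) (monomial a (coeff a f)) = monomial a (coeff a f) := by
            rw [aeval_monomial, monomial_eq]
            congr 1
            apply Finsupp.prod_congr
            intro v hv
            have hvC : v ∉ C := fun h => (Finsupp.mem_support_iff.mp hv) (hac v h)
            simp [hφ, hvC]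
          rw [hmon, coeff_monomial]
      have hcoeff : coeff m ((aeval φ) f) = coeff m f := by
        conv_lhs => rw [f.as_sum]
        rw [map_sum, coeff_sum, Finset.sum_congr rfl hterm, Finset.sum_ite_eq' f.support m]
        rw [if_pos hm]
      rw [RingHom.mem_ker] at hf
      rw [hf, coeff_zero] at hcoeff
      exact (MvPolynomial.mem_support_iff.mp hm) hcoeff.symm
  rw [hker]
  exact RingHom.ker_isPrime _

theorem PC_pow_eq (C : Finset (Fin n)) (s : ℕ) :
    PC K C ^ s = Ideal.span ((fun e => monomial e (1 : K)) ''
      {e : Fin n →₀ ℕ | (∀ v, e v ≠ 0 → v ∈ C) ∧ ∑ v ∈ C, e v = s}) := by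
  classical
  induction s with
  | zero =>
    have hset : {e : Fin n →₀ ℕ | (∀ v, e v ≠ 0 → v ∈ C) ∧ ∑ v ∈ C, e v = 0} = {0} := by
      ext e
      simp only [Set.mem_setOf_eq, Set.mem_singleton_iff]
      constructor
      · rintro ⟨h1, h2⟩
        ext v
        by_cases hv : e v = 0
        · simp [hv]
        · exact absurd (Finset.sum_eq_zero_iff.mp h2 v (h1 v hv)) hv
      · rintro rfl
        simp
    rw [pow_zero, hset, Set.image_singleton, monomial_zero', C_1, Ideal.span_singleton_one,
      Ideal.one_eq_top]
  | succ s ih =>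
    rw [pow_succ, ih, PC, Ideal.span_mul_span']
    congr 1
    ext z
    constructor
    · rintro ⟨_, ⟨e, ⟨he1, he2⟩, rfl⟩, _, ⟨v, hv, rfl⟩, rfl⟩
      have hvC : v ∈ C := hv
      refine ⟨e + Finsupp.single v 1, ⟨?_, ?_⟩, ?_⟩
      · intro w hw
        rw [Finsupp.add_apply] at hw
        by_cases hwv : w = v
        · subst hwv; exact hvC
        · refine he1 w ?_
          rwa [Finsupp.single_apply, if_neg (Ne.symm hwv), add_zero] at hw
      · have hsum : ∑ w ∈ C, Finsupp.single v 1 w = 1 := by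
          simp only [Finsupp.single_apply]
          rw [Finset.sum_ite_eq C v (fun _ => 1), if_pos hvC]
        simp only [Finsupp.add_apply, Finset.sum_add_distrib, he2, hsum]
      · show (monomial (e + Finsupp.single v 1)) (1 : K) =
            monomial e 1 * monomial (Finsupp.single v 1) 1
        rw [monomial_mul, one_mul]
    · rintro ⟨e', ⟨he1, he2⟩, rfl⟩
      have hex : ∃ v ∈ C, e' v ≠ 0 := by
        by_contra hcon
        push_neg at hcon
        rw [Finset.sum_eq_zero hcon] at he2
        omega
      obtain ⟨v, hvC, hv⟩ := hex
      have hle : Finsupp.single v 1 ≤ e' := Finsupp.single_le_iff.mpr (by omega)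
      set e := e' - Finsupp.single v 1 with hedef
      have he : e + Finsupp.single v 1 = e' := tsub_add_cancel_of_le hle
      have hsum : ∑ w ∈ C, Finsupp.single v 1 w = 1 := by
        simp only [Finsupp.single_apply]
        rw [Finset.sum_ite_eq C v (fun _ => 1), if_pos hvC]
      refine ⟨monomial e 1, ⟨e, ⟨?_, ?_⟩, rfl⟩, X v, ⟨v, hvC, rfl⟩, ?_⟩
      · intro w hw
        refine he1 w ?_
        rw [hedef, Finsupp.tsub_apply] at hw
        omega
      · have := congrArg (fun g => ∑ w ∈ C, g w) he
        simp only [Finsupp.add_apply, Finset.sum_add_distrib, hsum, he2] at this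
        omega
      · show monomial e (1 : K) * monomial (Finsupp.single v 1) 1 = monomial e' 1
        rw [monomial_mul, one_mul, he]

theorem exists_le_of_sum_le {C : Finset (Fin n)} (s : ℕ) (a : Fin n →₀ ℕ)
    (h : s ≤ ∑ v ∈ C, a v) :
    ∃ e : Fin n →₀ ℕ, (∀ v, e v ≠ 0 → v ∈ C) ∧ (∑ v ∈ C, e v = s) ∧ e ≤ a := by
  classical
  induction s with
  | zero => exact ⟨0, by simp, by simp, zero_le⟩
  | succ s ih =>
    obtain ⟨e, h1, h2, h3⟩ := ih (le_trans (Nat.le_succ s) h)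
    have hex : ∃ v ∈ C, e v < a v := by
      by_contra hcon
      push_neg at hcon
      have hle2 : ∑ v ∈ C, a v ≤ ∑ v ∈ C, e v := Finset.sum_le_sum hcon
      rw [h2] at hle2
      omega
    obtain ⟨v, hvC, hv⟩ := hex
    have hsum : ∑ w ∈ C, Finsupp.single v 1 w = 1 := by
      simp only [Finsupp.single_apply]
      rw [Finset.sum_ite_eq C v (fun _ => 1), if_pos hvC]
    refine ⟨e + Finsupp.single v 1, ?_, ?_, ?_⟩
    · intro w hw
      rw [Finsupp.add_apply] at hw
      by_cases hwv : w = v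
      · subst hwv; exact hvC
      · refine h1 w ?_
        rwa [Finsupp.single_apply, if_neg (Ne.symm hwv), add_zero] at hw
    · simp only [Finsupp.add_apply, Finset.sum_add_distrib, h2, hsum]
    · rw [Finsupp.le_def]
      intro w
      have h3w := Finsupp.le_def.mp h3 w
      rw [Finsupp.add_apply, Finsupp.single_apply]
      by_cases hwv : v = w
      · subst hwv; rw [if_pos rfl]; omega
      · rw [if_neg hwv]; omega

theorem mem_PC_pow {C : Finset (Fin n)} {s : ℕ} {f : MvPolynomial (Fin n) K} :
    f ∈ PC K C ^ s ↔ ∀ a ∈ f.support, s ≤ ∑ v ∈ C, a v := by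
  rw [PC_pow_eq, mem_ideal_span_monomial_image]
  apply forall₂_congr
  intro a _
  constructor
  · rintro ⟨e, ⟨_, hsum⟩, hle⟩
    calc s = ∑ v ∈ C, e v := hsum.symm
    _ ≤ ∑ v ∈ C, a v := Finset.sum_le_sum fun v _ => Finsupp.le_def.mp hle v
  · intro h
    obtain ⟨e, h1, h2, h3⟩ := exists_le_of_sum_le s a h
    exact ⟨e, ⟨h1, h2⟩, h3⟩

theorem edgeIdeal_le_PC {G : SimpleGraph (Fin n)} {C : Finset (Fin n)} (hC : IsCover G C) :
    edgeIdeal K n G ≤ PC K C := by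
  rw [edgeIdeal, Ideal.span_le]
  rintro _ ⟨v, w, hvw, rfl⟩
  rcases hC hvw with h | h
  · exact Ideal.mul_mem_right _ _ (Ideal.subset_span ⟨v, h, rfl⟩)
  · rw [mul_comm]
    exact Ideal.mul_mem_right _ _ (Ideal.subset_span ⟨w, h, rfl⟩)

theorem symbPow_edge_eq (G : SimpleGraph (Fin n)) (s : ℤ) (hs : 1 ≤ s) :
    symbPow K n (edgeIdeal K n G) s =
      ⨅ (C : Finset (Fin n)) (_ : IsCover G C), PC K C ^ s.toNat := by
  classical
  rw [symbPow, if_neg (by omega)]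
  apply le_antisymm
  · apply le_iInf₂
    intro C hC
    haveI := PC_isPrime (K := K) C
    obtain ⟨p, hp, hple⟩ := Ideal.exists_minimalPrimes_le (edgeIdeal_le_PC (K := K) hC)
    calc (⨅ p ∈ (edgeIdeal K n G).minimalPrimes, p ^ s.toNat) ≤ p ^ s.toNat := iInf₂_le p hp
    _ ≤ PC K C ^ s.toNat := Ideal.pow_right_mono hple _
  · apply le_iInf₂
    intro p hp
    haveI hpr : p.IsPrime := hp.1.1
    set Cp : Finset (Fin n) := Finset.univ.filter (fun v => X v ∈ p) with hCp
    have hmemCp : ∀ v : Fin n, v ∈ Cp ↔ (X v : MvPolynomial (Fin n) K) ∈ p := by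
      intro v; simp [hCp]
    have hcov : IsCover G Cp := by
      intro v w hvw
      have hm : (X v * X w : MvPolynomial (Fin n) K) ∈ p :=
        hp.1.2 (Ideal.subset_span ⟨v, w, hvw, rfl⟩)
      rcases hpr.mem_or_mem hm with h | h
      · exact Or.inl ((hmemCp v).mpr h)
      · exact Or.inr ((hmemCp w).mpr h)
    have hPCle : PC K Cp ≤ p := by
      rw [PC, Ideal.span_le]
      rintro _ ⟨v, hv, rfl⟩
      exact (hmemCp v).mp hv
    have hpeq : p = PC K Cp :=
      le_antisymm (hp.2 ⟨PC_isPrime Cp, edgeIdeal_le_PC hcov⟩ hPCle) hPCle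
    calc (⨅ (C : Finset (Fin n)) (_ : IsCover G C), PC K C ^ s.toNat)
        ≤ PC K Cp ^ s.toNat := iInf₂_le Cp hcov
    _ = p ^ s.toNat := by rw [hpeq]

theorem mem_symbPow_edge {G : SimpleGraph (Fin n)} {s : ℤ} (hs : 1 ≤ s)
    {f : MvPolynomial (Fin n) K} :
    f ∈ symbPow K n (edgeIdeal K n G) s ↔
      ∀ C : Finset (Fin n), IsCover G C → ∀ a ∈ f.support, s.toNat ≤ ∑ v ∈ C, a v := by
  rw [symbPow_edge_eq G s hs]
  simp only [Submodule.mem_iInf]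
  exact forall₂_congr fun C hC => mem_PC_pow

theorem monomial_mem_symbPow {G : SimpleGraph (Fin n)} {s : ℤ} (hs : 1 ≤ s)
    (B : Finset (Fin n)) :
    (monomial (expB B) (1 : K) ∈ symbPow K n (edgeIdeal K n G) s) ↔
      ∀ C : Finset (Fin n), IsCover G C → s.toNat ≤ (B ∩ C).card := by
  rw [mem_symbPow_edge hs]
  apply forall₂_congr
  intro C hC
  have hsupp : (monomial (expB B) (1 : K)).support = {expB B} := by
    classical
    rw [support_monomial]
    simp
  simp only [hsupp, Finset.mem_singleton, forall_eq]
  rw [sum_expB]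

theorem sqfreePart_eq (J : Ideal (MvPolynomial (Fin n) K)) :
    sqfreePart K n J = Ideal.span ((fun e => monomial e (1 : K)) ''
      {e : Fin n →₀ ℕ | (∃ B : Finset (Fin n), e = expB B) ∧ monomial e (1 : K) ∈ J}) := by
  rw [sqfreePart]
  congr 1
  ext m
  simp only [Set.mem_setOf_eq, Set.mem_image]
  constructor
  · rintro ⟨hm, B, rfl⟩
    exact ⟨expB B, ⟨⟨B, rfl⟩, by rwa [← prod_X_eq]⟩, (prod_X_eq B).symm⟩
  · rintro ⟨e, ⟨⟨B, rfl⟩, hmem⟩, rfl⟩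
    exact ⟨hmem, B, (prod_X_eq B).symm⟩

theorem mem_sqfreePart {J : Ideal (MvPolynomial (Fin n) K)} {f : MvPolynomial (Fin n) K} :
    f ∈ sqfreePart K n J ↔ ∀ a ∈ f.support,
      ∃ B : Finset (Fin n), monomial (expB B) (1 : K) ∈ J ∧ expB B ≤ a := by
  rw [sqfreePart_eq, mem_ideal_span_monomial_image]
  apply forall₂_congr
  intro a _
  constructor
  · rintro ⟨e, ⟨⟨B, rfl⟩, hm⟩, hle⟩
    exact ⟨B, hm, hle⟩
  · rintro ⟨B, hm, hle⟩
    exact ⟨expB B, ⟨⟨B, rfl⟩, hm⟩, hle⟩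

theorem expB_union_le (B C : Finset (Fin n)) : expB (B ∪ C) ≤ expB B + expB C := by
  classical
  rw [Finsupp.le_def]
  intro v
  rw [Finsupp.add_apply, expB_apply, expB_apply, expB_apply]
  by_cases hB : v ∈ B
  · rw [if_pos (Finset.mem_union_left _ hB), if_pos hB]
    omega
  · by_cases hC : v ∈ C
    · rw [if_pos (Finset.mem_union_right _ hC), if_neg hB, if_pos hC]
    · rw [if_neg hB, if_neg hC,
        if_neg (fun h => by rcases Finset.mem_union.mp h with h' | h' <;> simp_all)]

end SspAux

/-- If `x` is a simplicial vertex of `G` whose (nonempty) neighborhood is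
`A` with `|A| = d - 1` (so the closed neighborhood has `d ≥ 2` elements), then for every
`s ≥ 1`, `(I(G)^{s} : x·∏_{w ∈ A} w) = I(G \ N_G[x])^{s-d+1}`. -/
theorem ssp_colon_simplicial_vertex
    (K : Type) [Field K] (n : ℕ) (G : SimpleGraph (Fin n)) (x : Fin n)
    (d : ℕ) (hd : 2 ≤ d) (A : Finset (Fin n))
    (hA : ∀ w, w ∈ A ↔ G.Adj x w) (hcard : A.card = d - 1)
    (hsimp : ∀ p ∈ A, ∀ q ∈ A, p ≠ q → G.Adj p q)
    (s : ℕ) (hs : 1 ≤ s) :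
    colonOf K n (ssp K n (edgeIdeal K n G) (s : ℤ))
        ((X x : MvPolynomial (Fin n) K) * ∏ w ∈ A, X w) =
      ssp K n (edgeIdeal K n (delVerts n G (insert x (A : Set (Fin n)))))
        ((s : ℤ) - d + 1) := by
  classical
  set N : Finset (Fin n) := insert x A with hN
  have hxA : x ∉ A := fun h => G.irrefl ((hA x).mp h)
  have hNcard : N.card = d := by
    rw [hN, Finset.card_insert_of_notMem hxA, hcard]
    omega
  have hmemN : ∀ v : Fin n, v ∈ N ↔ (v = x ∨ v ∈ A) := by
    intro v
    simp [hN]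
  have hclique : ∀ u ∈ N, ∀ v ∈ N, u ≠ v → G.Adj u v := by
    intro u hu v hv huv
    rcases (hmemN u).mp hu with rfl | huA
    · rcases (hmemN v).mp hv with rfl | hvA
      · exact absurd rfl huv
      · exact (hA v).mp hvA
    · rcases (hmemN v).mp hv with rfl | hvA
      · exact ((hA u).mp huA).symm
      · exact hsimp u huA v hvA huv
  have hcoverN : ∀ C : Finset (Fin n), SspAux.IsCover G C → d - 1 ≤ (N ∩ C).card := by
    intro C hC
    have hsd : (N \ C).card ≤ 1 := by
      by_contra hcon
      push_neg at hcon
      obtain ⟨u, hu, v, hv, huv⟩ := Finset.one_lt_card.mp hcon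
      have hu' := Finset.mem_sdiff.mp hu
      have hv' := Finset.mem_sdiff.mp hv
      rcases hC (hclique u hu'.1 v hv'.1 huv) with h | h
      · exact hu'.2 h
      · exact hv'.2 h
    have hids := Finset.card_sdiff_add_card_inter N C
    omega
  have hmemU : ∀ v : Fin n, v ∈ (insert x (A : Set (Fin n))) ↔ v ∈ N := by
    intro v
    simp [hN, Set.mem_insert_iff]
  have hG'adj : ∀ v w : Fin n, (delVerts n G (insert x (A : Set (Fin n)))).Adj v w ↔
      (G.Adj v w ∧ v ∉ N ∧ w ∉ N) := by
    intro v w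
    have h0 : (delVerts n G (insert x (A : Set (Fin n)))).Adj v w ↔
        (G.Adj v w ∧ v ∉ insert x (A : Set (Fin n)) ∧ w ∉ insert x (A : Set (Fin n))) := Iff.rfl
    rw [h0]
    constructor
    · rintro ⟨h1, h2, h3⟩
      exact ⟨h1, fun h => h2 ((hmemU v).mpr h), fun h => h3 ((hmemU w).mpr h)⟩
    · rintro ⟨h1, h2, h3⟩
      exact ⟨h1, fun h => h2 ((hmemU v).mp h), fun h => h3 ((hmemU w).mp h)⟩
  have hcovG'ofG : ∀ C : Finset (Fin n), SspAux.IsCover G C →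
      SspAux.IsCover (delVerts n G (insert x (A : Set (Fin n)))) (C \ N) := by
    intro C hC v w hvw
    obtain ⟨hadj, hv, hw⟩ := (hG'adj v w).mp hvw
    rcases hC hadj with h | h
    · exact Or.inl (Finset.mem_sdiff.mpr ⟨h, hv⟩)
    · exact Or.inr (Finset.mem_sdiff.mpr ⟨h, hw⟩)
  have hcovGofG' : ∀ C' : Finset (Fin n),
      SspAux.IsCover (delVerts n G (insert x (A : Set (Fin n)))) C' →
      SspAux.IsCover G ((C' \ N) ∪ A) := by
    intro C' hC' v w hvw
    by_cases hvA : v ∈ A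
    · exact Or.inl (Finset.mem_union_right _ hvA)
    by_cases hwA : w ∈ A
    · exact Or.inr (Finset.mem_union_right _ hwA)
    by_cases hvx : v = x
    · subst hvx
      exact Or.inr (Finset.mem_union_right _ ((hA w).mpr hvw))
    by_cases hwx : w = x
    · subst hwx
      exact Or.inl (Finset.mem_union_right _ ((hA v).mpr hvw.symm))
    have hvN : v ∉ N := fun h => by
      rcases (hmemN v).mp h with h' | h'
      · exact hvx h'
      · exact hvA h'
    have hwN : w ∉ N := fun h => by
      rcases (hmemN w).mp h with h' | h'
      · exact hwx h'
      · exact hwA h'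
    rcases hC' ((hG'adj v w).mpr ⟨hvw, hvN, hwN⟩) with h | h
    · exact Or.inl (Finset.mem_union_left _ (Finset.mem_sdiff.mpr ⟨h, hvN⟩))
    · exact Or.inr (Finset.mem_union_left _ (Finset.mem_sdiff.mpr ⟨h, hwN⟩))
  have hu : (X x : MvPolynomial (Fin n) K) * ∏ w ∈ A, X w = monomial (SspAux.expB N) 1 := by
    rw [hN, ← Finset.prod_insert hxA]
    exact SspAux.prod_X_eq _
  have hmemcolon : ∀ (J : Ideal (MvPolynomial (Fin n) K)) (f : MvPolynomial (Fin n) K),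
      f ∈ colonOf K n J (monomial (SspAux.expB N) 1) ↔
        f * monomial (SspAux.expB N) 1 ∈ J := by
    intro J f
    unfold colonOf
    exact Ideal.mem_colon_span_singleton
  have hs' : (1 : ℤ) ≤ (s : ℤ) := by exact_mod_cast hs
  rw [hu]
  rcases le_or_gt ((s : ℤ) - d + 1) 0 with h0 | hpos
  · -- degenerate case : the right-hand side is the whole ring
    have hRHS : ssp K n (edgeIdeal K n (delVerts n G (insert x (A : Set (Fin n)))))
        ((s : ℤ) - d + 1) = ⊤ := by
      unfold ssp symbPow
      rw [if_pos h0, Ideal.eq_top_iff_one]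
      unfold sqfreePart
      exact Ideal.subset_span ⟨Submodule.mem_top, ⟨∅, by simp⟩⟩
    have huIn : monomial (SspAux.expB N) (1 : K) ∈ ssp K n (edgeIdeal K n G) (s : ℤ) := by
      unfold ssp sqfreePart
      apply Ideal.subset_span
      refine ⟨?_, N, (SspAux.prod_X_eq N).symm⟩
      rw [SspAux.monomial_mem_symbPow hs']
      intro C hC
      have := hcoverN C hC
      omega
    rw [hRHS, eq_top_iff]
    intro f _
    rw [hmemcolon]
    exact Ideal.mul_mem_left _ f huIn
  · have h1 : (1 : ℤ) ≤ (s : ℤ) - d + 1 := hpos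
    apply le_antisymm
    · -- the colon ideal is contained in the symbolic power of the deleted graph
      intro f hf
      rw [hmemcolon] at hf
      unfold ssp at hf ⊢
      rw [SspAux.mem_sqfreePart] at hf ⊢
      intro a ha
      have hmemprod : a + SspAux.expB N ∈ (f * monomial (SspAux.expB N) (1 : K)).support := by
        rw [MvPolynomial.mem_support_iff, coeff_mul_monomial, mul_one]
        exact MvPolynomial.mem_support_iff.mp ha
      obtain ⟨B, hBmem, hBle⟩ := hf _ hmemprod
      refine ⟨B \ N, ?_, ?_⟩
      · rw [SspAux.monomial_mem_symbPow h1]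
        intro C' hC'
        have hC'sd : SspAux.IsCover (delVerts n G (insert x (A : Set (Fin n)))) (C' \ N) := by
          intro v w hvw
          obtain ⟨hadj, hv, hw⟩ := (hG'adj v w).mp hvw
          rcases hC' hvw with h | h
          · exact Or.inl (Finset.mem_sdiff.mpr ⟨h, hv⟩)
          · exact Or.inr (Finset.mem_sdiff.mpr ⟨h, hw⟩)
        have hcov : SspAux.IsCover G (((C' \ N) \ N) ∪ A) := hcovGofG' _ hC'sd
        have hBC := (SspAux.monomial_mem_symbPow hs' B).mp hBmem _ hcov
        have hsub : B ∩ ((((C' \ N) \ N)) ∪ A) ⊆ ((B \ N) ∩ C') ∪ A := by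
          intro v hv
          obtain ⟨hvB, hv2⟩ := Finset.mem_inter.mp hv
          rcases Finset.mem_union.mp hv2 with h | h
          · obtain ⟨hvC', hvN⟩ := Finset.mem_sdiff.mp (Finset.mem_sdiff.mp h).1
            exact Finset.mem_union_left _
              (Finset.mem_inter.mpr ⟨Finset.mem_sdiff.mpr ⟨hvB, hvN⟩, hvC'⟩)
          · exact Finset.mem_union_right _ h
        have hcard1 := (Finset.card_le_card hsub).trans (Finset.card_union_le _ _)
        omega
      · rw [Finsupp.le_def]
        intro v
        rw [SspAux.expB_apply]
        by_cases hv : v ∈ B \ N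
        · rw [if_pos hv]
          obtain ⟨hvB, hvN⟩ := Finset.mem_sdiff.mp hv
          have hlev := Finsupp.le_def.mp hBle v
          rw [Finsupp.add_apply, SspAux.expB_apply B, SspAux.expB_apply N,
            if_pos hvB, if_neg hvN] at hlev
          omega
        · rw [if_neg hv]
          exact Nat.zero_le _
    · -- the symbolic power of the deleted graph is contained in the colon ideal
      unfold ssp sqfreePart
      rw [Ideal.span_le]
      rintro m ⟨hm1, B', rfl⟩
      rw [SspAux.prod_X_eq] at hm1 ⊢
      rw [SetLike.mem_coe, hmemcolon, monomial_mul, one_mul]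
      have hBmem : monomial (SspAux.expB (B' ∪ N)) (1 : K) ∈
          symbPow K n (edgeIdeal K n G) (s : ℤ) := by
        rw [SspAux.monomial_mem_symbPow hs']
        intro C hC
        have h3 := hcoverN C hC
        have hcovC' := hcovG'ofG C hC
        have ht' := (SspAux.monomial_mem_symbPow h1 B').mp hm1 _ hcovC'
        have hdisj : Disjoint (N ∩ C) (B' ∩ (C \ N)) := by
          rw [Finset.disjoint_left]
          intro v hv1 hv2
          exact (Finset.mem_sdiff.mp (Finset.mem_inter.mp hv2).2).2 (Finset.mem_inter.mp hv1).1
        have hsub : (N ∩ C) ∪ (B' ∩ (C \ N)) ⊆ (B' ∪ N) ∩ C := by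
          intro v hv
          rcases Finset.mem_union.mp hv with h | h
          · obtain ⟨ha', hb'⟩ := Finset.mem_inter.mp h
            exact Finset.mem_inter.mpr ⟨Finset.mem_union_right _ ha', hb'⟩
          · obtain ⟨ha', hb'⟩ := Finset.mem_inter.mp h
            exact Finset.mem_inter.mpr ⟨Finset.mem_union_left _ ha', (Finset.mem_sdiff.mp hb').1⟩
        have hcard2 := Finset.card_le_card hsub
        rw [Finset.card_union_of_disjoint hdisj] at hcard2
        omega
      have hsq : monomial (SspAux.expB (B' ∪ N)) (1 : K) ∈
          sqfreePart K n (symbPow K n (edgeIdeal K n G) (s : ℤ)) := by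
        unfold sqfreePart
        exact Ideal.subset_span ⟨hBmem, B' ∪ N, (SspAux.prod_X_eq _).symm⟩
      have hkey : monomial (SspAux.expB B' + SspAux.expB N) (1 : K) =
          monomial (SspAux.expB (B' ∪ N)) 1 *
            monomial ((SspAux.expB B' + SspAux.expB N) - SspAux.expB (B' ∪ N)) 1 := by
        rw [monomial_mul, one_mul, add_tsub_cancel_of_le (SspAux.expB_union_le B' N)]
      show monomial (SspAux.expB B' + SspAux.expB N) (1 : K) ∈
        sqfreePart K n (symbPow K n (edgeIdeal K n G) (s : ℤ))
      rw [hkey]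
      exact Ideal.mul_mem_right _ _ hsq
end

section
/- Let G be a star triangle graph with t triangles. Then the ideal I(G)^{t+1} has a minimal monomial generator of degree 2t+1; in fact, the product of all 2t+1 variables (vertices of G) is a minimal generator of I(G)^{t+1}. -/
open MvPolynomial

/-! ### Auxiliary development -/

noncomputable section Aux
open Finset

variable {K : Type} [Field K] {n : ℕ}

def ind (A : Finset (Fin n)) : Fin n →₀ ℕ := ∑ v ∈ A, Finsupp.single v 1

lemma ind_apply (A : Finset (Fin n)) (w : Fin n) : ind A w = if w ∈ A then 1 else 0 := by
  classical
  rw [ind, Finsupp.finset_sum_apply]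
  simp [Finsupp.single_apply]

lemma prod_X_eq (A : Finset (Fin n)) :
    (∏ v ∈ A, X v : MvPolynomial (Fin n) K) = monomial (ind A) 1 := by
  classical
  induction A using Finset.induction with
  | empty => simp [ind]
  | @insert a s2 h ih =>
    simp only [Finset.prod_insert h, ih, ind, Finset.sum_insert h]
    rw [show (X a : MvPolynomial (Fin n) K) = monomial (Finsupp.single a 1) 1 from rfl,
      monomial_mul, one_mul]

/-- monomial-degree ideal: monomials with `C`-degree at least `s`. -/
def Jdeg (K : Type) [Field K] {n : ℕ} (C : Finset (Fin n)) (s : ℕ) :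
    Ideal (MvPolynomial (Fin n) K) :=
  Ideal.span ((fun e => monomial e (1 : K)) '' {e | s ≤ ∑ v ∈ C, e v})

lemma Jdeg_zero (C : Finset (Fin n)) : Jdeg K C 0 = ⊤ := by
  rw [Ideal.eq_top_iff_one]
  exact Ideal.subset_span ⟨0, by simp, by simp⟩

lemma Jdeg_mul (C : Finset (Fin n)) (a b : ℕ) :
    Jdeg K C a * Jdeg K C b ≤ Jdeg K C (a + b) := by
  rw [Jdeg, Jdeg, Ideal.span_mul_span']
  apply Ideal.span_le.2
  rintro x ⟨y, ⟨e, he, rfl⟩, z, ⟨f, hf, rfl⟩, rfl⟩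
  refine Ideal.subset_span ⟨e + f, ?_, by simp [monomial_mul]⟩
  simp only [Set.mem_setOf_eq, Finsupp.add_apply, Finset.sum_add_distrib]
  exact add_le_add he hf

lemma spanX_le_Jdeg (C : Finset (Fin n)) :
    Ideal.span (X '' ↑C : Set (MvPolynomial (Fin n) K)) ≤ Jdeg K C 1 := by
  apply Ideal.span_le.2
  rintro x ⟨v, hv, rfl⟩
  refine Ideal.subset_span ⟨Finsupp.single v 1, ?_, rfl⟩
  show 1 ≤ ∑ w ∈ C, Finsupp.single v (1:ℕ) w
  refine le_trans ?_ (Finset.single_le_sum (fun i _ => Nat.zero_le _) hv)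
  rw [Finsupp.single_eq_same]

lemma spanX_pow_le_Jdeg (C : Finset (Fin n)) (s : ℕ) :
    Ideal.span (X '' ↑C : Set (MvPolynomial (Fin n) K)) ^ s ≤ Jdeg K C s := by
  induction s with
  | zero => rw [pow_zero, Ideal.one_eq_top, Jdeg_zero]
  | succ s ih =>
    calc Ideal.span (X '' ↑C : Set (MvPolynomial (Fin n) K)) ^ (s+1)
        ≤ Jdeg K C s * Jdeg K C 1 := by
          rw [pow_succ]; exact mul_le_mul' ih (spanX_le_Jdeg C)
      _ ≤ Jdeg K C (s + 1) := Jdeg_mul C s 1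

lemma card_le_of_mem_Jdeg {C A : Finset (Fin n)} {s : ℕ}
    (h : (monomial (ind A) 1 : MvPolynomial (Fin n) K) ∈ Jdeg K C s) :
    s ≤ (C ∩ A).card := by
  classical
  rw [Jdeg, mem_ideal_span_monomial_image] at h
  have hs : ind A ∈ (monomial (ind A) (1:K)).support := by
    rw [support_monomial, if_neg one_ne_zero]; simp
  obtain ⟨e, he, hle⟩ := h _ hs
  refine le_trans he (le_trans (Finset.sum_le_sum fun v _ => hle v) ?_)
  have : ∑ v ∈ C, ind A v = (C ∩ A).card := by
    simp only [ind_apply]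
    rw [Finset.sum_ite_mem C A (fun _ => 1)]
    simp
  omega

def phiC (K : Type) [Field K] {n : ℕ} (C : Finset (Fin n)) :
    MvPolynomial (Fin n) K →ₐ[K] MvPolynomial (Fin n) K :=
  aeval (fun v => if v ∈ C then 0 else X v)

lemma sub_phiC_mem (C : Finset (Fin n)) (p : MvPolynomial (Fin n) K) :
    p - phiC K C p ∈ Ideal.span (X '' ↑C : Set (MvPolynomial (Fin n) K)) := by
  induction p using MvPolynomial.induction_on with
  | C r => simp [phiC]
  | add p q hp hq =>
    have := Ideal.add_mem _ hp hq
    convert this using 1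
    simp only [map_add]; ring
  | mul_X p v hp =>
    have key : p * X v - phiC K C (p * X v)
        = (p - phiC K C p) * X v + phiC K C p * (X v - phiC K C (X v)) := by
      simp only [map_mul]; ring
    rw [key]
    refine Ideal.add_mem _ (Ideal.mul_mem_right _ _ hp) ?_
    by_cases hv : v ∈ C
    · have : phiC K C (X v) = 0 := by simp [phiC, hv]
      rw [this, sub_zero]
      exact Ideal.mul_mem_left _ _ (Ideal.subset_span ⟨v, hv, rfl⟩)
    · have : phiC K C (X v) = X v := by simp [phiC, hv]
      rw [this, sub_self, mul_zero]
      exact Ideal.zero_mem _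

lemma spanX_eq_ker (C : Finset (Fin n)) :
    Ideal.span (X '' ↑C : Set (MvPolynomial (Fin n) K))
      = RingHom.ker (phiC K C).toRingHom := by
  apply le_antisymm
  · apply Ideal.span_le.2
    rintro x ⟨v, hv, rfl⟩
    simp only [SetLike.mem_coe, RingHom.mem_ker, AlgHom.toRingHom_eq_coe,
      RingHom.coe_coe, phiC, aeval_X]
    rw [if_pos (Finset.mem_coe.mp hv)]
  · intro p hp
    rw [RingHom.mem_ker] at hp
    have := sub_phiC_mem C p
    rwa [show phiC K C p = ((phiC K C).toRingHom p) from rfl, hp, sub_zero] at this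

lemma spanX_isPrime (C : Finset (Fin n)) :
    (Ideal.span (X '' ↑C : Set (MvPolynomial (Fin n) K))).IsPrime := by
  rw [spanX_eq_ker]
  exact RingHom.ker_isPrime _

lemma X_mem_spanX_iff (C : Finset (Fin n)) (w : Fin n) :
    (X w : MvPolynomial (Fin n) K) ∈ Ideal.span (X '' ↑C : Set (MvPolynomial (Fin n) K))
      ↔ w ∈ C := by
  constructor
  · intro h
    rw [mem_ideal_span_X_image] at h
    obtain ⟨i, hi, hne⟩ := h (Finsupp.single w 1) (by simp [support_X])
    rwa [show i = w by by_contra hne'; exact hne (Finsupp.single_eq_of_ne' (Ne.symm hne'))] at hi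
  · intro h; exact Ideal.subset_span ⟨w, h, rfl⟩

lemma prod_X_mem_pow (p : Ideal (MvPolynomial (Fin n) K)) (S : Finset (Fin n))
    (h : ∀ v ∈ S, X v ∈ p) : (∏ v ∈ S, X v : MvPolynomial (Fin n) K) ∈ p ^ S.card := by
  classical
  induction S using Finset.induction with
  | empty => simp [Ideal.one_eq_top]
  | @insert a s2 ha ih =>
    rw [Finset.prod_insert ha, Finset.card_insert_of_notMem ha, pow_succ']
    exact Ideal.mul_mem_mul (h a (Finset.mem_insert_self a s2))
      (ih (fun v hv => h v (Finset.mem_insert_of_mem hv)))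

/-! ### Star triangle combinatorics -/

/-- The vertex of `Fin (2t+1)` with value `g i` (assuming `g i < 2t+1`). -/
def gvx (t : ℕ) (g : Fin t → ℕ) (i : Fin t) : Fin (2*t+1) :=
  ⟨g i % (2*t+1), Nat.mod_lt _ (by omega)⟩

/-- A "triangle selector": `g i` is one of the two outer vertices of triangle `i`. -/
def Sel (t : ℕ) (g : Fin t → ℕ) : Prop :=
  ∀ i : Fin t, g i = 2*(i:ℕ)+1 ∨ g i = 2*(i:ℕ)+2

lemma gvx_val {t : ℕ} {g : Fin t → ℕ} (hg : Sel t g) (i : Fin t) :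
    ((gvx t g i : Fin (2*t+1)) : ℕ) = g i := by
  have h2 := i.2
  rcases hg i with h | h <;> exact Nat.mod_eq_of_lt (by omega)

/-- The associated vertex cover of the star triangle: `0` plus one vertex per triangle. -/
def Cg (t : ℕ) (g : Fin t → ℕ) : Finset (Fin (2*t+1)) :=
  insert 0 (Finset.image (gvx t g) Finset.univ)

lemma val_zero' (t : ℕ) : ((0 : Fin (2*t+1)) : ℕ) = 0 := rfl

lemma mem_Cg {t : ℕ} {g : Fin t → ℕ} (hg : Sel t g) (w : Fin (2*t+1)) :
    w ∈ Cg t g ↔ (w:ℕ) = 0 ∨ ∃ i : Fin t, (w:ℕ) = g i := by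
  rw [Cg, Finset.mem_insert, Finset.mem_image]
  constructor
  · rintro (rfl | ⟨i, _, rfl⟩)
    · exact Or.inl rfl
    · exact Or.inr ⟨i, gvx_val hg i⟩
  · rintro (h0 | ⟨i, hi⟩)
    · exact Or.inl (Fin.ext h0)
    · exact Or.inr ⟨i, Finset.mem_univ i, Fin.ext (by rw [gvx_val hg, hi])⟩

lemma card_Cg {t : ℕ} {g : Fin t → ℕ} (hg : Sel t g) : (Cg t g).card = t + 1 := by
  rw [Cg, Finset.card_insert_of_notMem, Finset.card_image_of_injective _ ?inj,
    Finset.card_univ, Fintype.card_fin]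
  case inj =>
    intro i j hij
    have h1 : g i = g j := by
      have := congrArg Fin.val hij
      rwa [gvx_val hg, gvx_val hg] at this
    have h2 := hg i; have h3 := hg j
    exact Fin.ext (by omega)
  · rw [Finset.mem_image]
    rintro ⟨i, _, hi⟩
    have := congrArg Fin.val hi
    rw [gvx_val hg, val_zero'] at this
    rcases hg i with h | h <;> omega

lemma Cg_cover {t : ℕ} {g : Fin t → ℕ} (hg : Sel t g) {u v : Fin (2*t+1)}
    (h : (starTriangle t).Adj u v) : u ∈ Cg t g ∨ v ∈ Cg t g := by
  obtain ⟨hne, h0⟩ := h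
  by_cases hu : (u:ℕ) = 0
  · exact Or.inl ((mem_Cg hg u).2 (Or.inl hu))
  by_cases hv : (v:ℕ) = 0
  · exact Or.inr ((mem_Cg hg v).2 (Or.inl hv))
  have heq : ((u:ℕ) - 1)/2 = ((v:ℕ) - 1)/2 := by tauto
  set i : ℕ := ((u:ℕ) - 1)/2 with hidef
  have hit : i < t := by have := u.2; omega
  have hvals : ((u:ℕ) = 2*i+1 ∧ (v:ℕ) = 2*i+2) ∨ ((u:ℕ) = 2*i+2 ∧ (v:ℕ) = 2*i+1) := by
    have hu2 := u.2; have hv2 := v.2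
    have hne' : (u:ℕ) ≠ (v:ℕ) := fun h => hne (Fin.ext h)
    omega
  have hgi := hg ⟨i, hit⟩
  simp only [Fin.val_mk] at hgi
  rcases hgi with hgi | hgi <;> rcases hvals with ⟨h1, h2⟩ | ⟨h1, h2⟩
  · exact Or.inl ((mem_Cg hg u).2 (Or.inr ⟨⟨i, hit⟩, by omega⟩))
  · exact Or.inr ((mem_Cg hg v).2 (Or.inr ⟨⟨i, hit⟩, by omega⟩))
  · exact Or.inr ((mem_Cg hg v).2 (Or.inr ⟨⟨i, hit⟩, by omega⟩))
  · exact Or.inl ((mem_Cg hg u).2 (Or.inr ⟨⟨i, hit⟩, by omega⟩))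

lemma edgeIdeal_le_spanX_Cg (K : Type) [Field K] {t : ℕ} {g : Fin t → ℕ} (hg : Sel t g) :
    edgeIdeal K (2*t+1) (starTriangle t) ≤
      Ideal.span (X '' ↑(Cg t g) : Set (MvPolynomial (Fin (2*t+1)) K)) := by
  rw [edgeIdeal]
  apply Ideal.span_le.2
  rintro m ⟨v, w, hadj, rfl⟩
  rcases Cg_cover hg hadj with h | h
  · exact Ideal.mul_mem_right _ _ ((X_mem_spanX_iff _ _).2 h)
  · exact Ideal.mul_mem_left _ _ ((X_mem_spanX_iff _ _).2 h)

/-- The other outer vertex of triangle `i`. -/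
def othx (t : ℕ) (g : Fin t → ℕ) (i : Fin t) : Fin (2*t+1) :=
  gvx t (fun j => 4*(j:ℕ)+3 - g j) i

lemma othx_val {t : ℕ} {g : Fin t → ℕ} (hg : Sel t g) (i : Fin t) :
    ((othx t g i : Fin (2*t+1)) : ℕ) = 4*(i:ℕ)+3 - g i := by
  have hsel : Sel t (fun j => 4*(j:ℕ)+3 - g j) := by
    intro j
    show 4*(j:ℕ)+3 - g j = 2*(j:ℕ)+1 ∨ 4*(j:ℕ)+3 - g j = 2*(j:ℕ)+2
    rcases hg j with h | h <;> omega
  exact gvx_val hsel i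

lemma othx_not_mem_Cg {t : ℕ} {g : Fin t → ℕ} (hg : Sel t g) (i : Fin t) :
    othx t g i ∉ Cg t g := by
  rw [mem_Cg hg, othx_val hg]
  push_neg
  have hi2 := i.2
  constructor
  · rcases hg i with h | h <;> omega
  · intro j hc
    by_cases hij : i = j
    · subst hij
      rcases hg i with h | h <;> omega
    · have hij' : (i:ℕ) ≠ (j:ℕ) := fun hv => hij (Fin.ext hv)
      rcases hg i with h | h <;> rcases hg j with h' | h' <;> omega

lemma adj_gvx_othx {t : ℕ} {g : Fin t → ℕ} (hg : Sel t g) (i : Fin t) :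
    (starTriangle t).Adj (gvx t g i) (othx t g i) := by
  have h1 := gvx_val hg i
  have h2 := othx_val hg i
  have hgi := hg i
  constructor
  · intro h
    have := congrArg Fin.val h
    omega
  · right; right
    rw [h1, h2]
    rcases hgi with h | h <;> omega

lemma adj_zero_othx {t : ℕ} {g : Fin t → ℕ} (hg : Sel t g) (i : Fin t) :
    (starTriangle t).Adj 0 (othx t g i) := by
  have h2 := othx_val hg i
  have hgi := hg i
  constructor
  · intro h
    have := congrArg Fin.val h
    rw [val_zero'] at this
    omega
  · left; exact val_zero' t

lemma spanX_Cg_minimalPrime (K : Type) [Field K] {t : ℕ} (ht : 1 ≤ t) {g : Fin t → ℕ}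
    (hg : Sel t g) :
    Ideal.span (X '' ↑(Cg t g) : Set (MvPolynomial (Fin (2*t+1)) K))
      ∈ (edgeIdeal K (2*t+1) (starTriangle t)).minimalPrimes := by
  constructor
  · exact ⟨spanX_isPrime _, edgeIdeal_le_spanX_Cg K hg⟩
  · rintro q ⟨hq, hIq⟩ hqle
    apply Ideal.span_le.2
    rintro x ⟨w, hw, rfl⟩
    rcases (mem_Cg hg w).1 (Finset.mem_coe.mp hw) with h0 | ⟨i, hi⟩
    · -- w = 0 : use the edge (0, othx 0)
      have hw0 : w = 0 := Fin.ext h0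
      subst hw0
      set i0 : Fin t := ⟨0, ht⟩
      have hadj := adj_zero_othx hg i0
      have hmem : (X 0 * X (othx t g i0) : MvPolynomial (Fin (2*t+1)) K) ∈ q :=
        hIq (Ideal.subset_span ⟨0, othx t g i0, hadj, rfl⟩)
      rcases hq.mem_or_mem hmem with h | h
      · exact h
      · exfalso
        exact othx_not_mem_Cg hg i0 ((X_mem_spanX_iff _ _).1 (hqle h))
    · -- w = gvx i
      have hwi : w = gvx t g i := Fin.ext (by rw [gvx_val hg, hi])
      subst hwi
      have hadj := adj_gvx_othx hg i
      have hmem : (X (gvx t g i) * X (othx t g i) : MvPolynomial (Fin (2*t+1)) K) ∈ q :=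
        hIq (Ideal.subset_span ⟨gvx t g i, othx t g i, hadj, rfl⟩)
      rcases hq.mem_or_mem hmem with h | h
      · exact h
      · exfalso
        exact othx_not_mem_Cg hg i ((X_mem_spanX_iff _ _).1 (hqle h))

end Aux

noncomputable section Aux4
open Finset

variable {K : Type} [Field K]

lemma exists_select {t : ℕ} (ht : 1 ≤ t) (p : Ideal (MvPolynomial (Fin (2*t+1)) K))
    (hp : p.IsPrime) (hle : edgeIdeal K (2*t+1) (starTriangle t) ≤ p) :
    ∃ S : Finset (Fin (2*t+1)), t + 1 ≤ S.card ∧ ∀ v ∈ S, X v ∈ p := by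
  classical
  by_cases h0 : (X 0 : MvPolynomial (Fin (2*t+1)) K) ∈ p
  · -- pick for each triangle a vertex lying in p
    have hsa : Sel t (fun j => 2*(j:ℕ)+1) := fun i => Or.inl rfl
    have hsb : Sel t (fun j => 2*(j:ℕ)+2) := fun i => Or.inr rfl
    have hg : Sel t (fun i => if (X (gvx t (fun j => 2*(j:ℕ)+1) i) :
        MvPolynomial (Fin (2*t+1)) K) ∈ p then 2*(i:ℕ)+1 else 2*(i:ℕ)+2) := by
      intro i
      show (if (X (gvx t (fun j => 2*(j:ℕ)+1) i) : MvPolynomial (Fin (2*t+1)) K) ∈ p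
          then 2*(i:ℕ)+1 else 2*(i:ℕ)+2) = 2*(i:ℕ)+1 ∨
        (if (X (gvx t (fun j => 2*(j:ℕ)+1) i) : MvPolynomial (Fin (2*t+1)) K) ∈ p
          then 2*(i:ℕ)+1 else 2*(i:ℕ)+2) = 2*(i:ℕ)+2
      by_cases hh : (X (gvx t (fun j => 2*(j:ℕ)+1) i) : MvPolynomial (Fin (2*t+1)) K) ∈ p
      · rw [if_pos hh]; exact Or.inl rfl
      · rw [if_neg hh]; exact Or.inr rfl
    set g : Fin t → ℕ := fun i => if (X (gvx t (fun j => 2*(j:ℕ)+1) i) :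
        MvPolynomial (Fin (2*t+1)) K) ∈ p then 2*(i:ℕ)+1 else 2*(i:ℕ)+2 with hgdef
    have hclaim : ∀ i : Fin t, (X (gvx t g i) : MvPolynomial (Fin (2*t+1)) K) ∈ p := by
      intro i
      have h1 : ((gvx t (fun j => 2*(j:ℕ)+1) i : Fin (2*t+1)) : ℕ) = 2*(i:ℕ)+1 :=
        gvx_val hsa i
      have h2 : ((gvx t (fun j => 2*(j:ℕ)+2) i : Fin (2*t+1)) : ℕ) = 2*(i:ℕ)+2 :=
        gvx_val hsb i
      have hadj : (starTriangle t).Adj (gvx t (fun j => 2*(j:ℕ)+1) i)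
          (gvx t (fun j => 2*(j:ℕ)+2) i) := by
        constructor
        · intro h; have := congrArg Fin.val h; omega
        · right; right; rw [h1, h2]; omega
      have hmem : (X (gvx t (fun j => 2*(j:ℕ)+1) i) * X (gvx t (fun j => 2*(j:ℕ)+2) i) :
          MvPolynomial (Fin (2*t+1)) K) ∈ p :=
        hle (Ideal.subset_span ⟨_, _, hadj, rfl⟩)
      have hgi : g i = if (X (gvx t (fun j => 2*(j:ℕ)+1) i) :
          MvPolynomial (Fin (2*t+1)) K) ∈ p then 2*(i:ℕ)+1 else 2*(i:ℕ)+2 := by rw [hgdef]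
      by_cases hh : (X (gvx t (fun j => 2*(j:ℕ)+1) i) : MvPolynomial (Fin (2*t+1)) K) ∈ p
      · have he : gvx t g i = gvx t (fun j => 2*(j:ℕ)+1) i := by
          apply Fin.ext
          rw [gvx_val hg, h1, hgi, if_pos hh]
        rw [he]; exact hh
      · have hb : (X (gvx t (fun j => 2*(j:ℕ)+2) i) : MvPolynomial (Fin (2*t+1)) K) ∈ p := by
          rcases hp.mem_or_mem hmem with h | h
          · exact absurd h hh
          · exact h
        have he : gvx t g i = gvx t (fun j => 2*(j:ℕ)+2) i := by
          apply Fin.ext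
          rw [gvx_val hg, h2, hgi, if_neg hh]
        rw [he]; exact hb
    refine ⟨Cg t g, by rw [card_Cg hg], ?_⟩
    intro v hv
    rcases (mem_Cg hg v).1 hv with hz | ⟨i, hi⟩
    · rw [show v = 0 from Fin.ext hz]; exact h0
    · have : v = gvx t g i := Fin.ext (by rw [gvx_val hg, hi])
      rw [this]; exact hclaim i
  · refine ⟨Finset.univ.erase 0, ?_, ?_⟩
    · rw [Finset.card_erase_of_mem (Finset.mem_univ 0), Finset.card_univ, Fintype.card_fin]
      omega
    · intro v hv
      have hvne : v ≠ 0 := (Finset.mem_erase.1 hv).1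
      have hadj : (starTriangle t).Adj 0 v := ⟨Ne.symm hvne, Or.inl rfl⟩
      have hmem : (X 0 * X v : MvPolynomial (Fin (2*t+1)) K) ∈ p :=
        hle (Ideal.subset_span ⟨0, v, hadj, rfl⟩)
      rcases hp.mem_or_mem hmem with h | h
      · exact absurd h h0
      · exact h

lemma mem_symbPow_u {t : ℕ} (ht : 1 ≤ t) :
    (∏ v : Fin (2*t+1), X v : MvPolynomial (Fin (2*t+1)) K) ∈
      symbPow K (2*t+1) (edgeIdeal K (2*t+1) (starTriangle t)) ((t:ℤ)+1) := by
  rw [symbPow, if_neg (by omega : ¬ ((t:ℤ)+1 ≤ 0)),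
    show ((t:ℤ)+1).toNat = t+1 by omega]
  rw [Submodule.mem_iInf]
  intro p
  rw [Submodule.mem_iInf]
  intro hp
  obtain ⟨S, hcard, hS⟩ := exists_select ht p hp.1.1 hp.1.2
  have h1 : (∏ v ∈ S, X v : MvPolynomial (Fin (2*t+1)) K) ∈ p ^ S.card :=
    prod_X_mem_pow p S hS
  have h3 : (∏ v ∈ S, X v : MvPolynomial (Fin (2*t+1)) K) ∈ p ^ (t+1) :=
    Ideal.pow_le_pow_right hcard h1
  rw [← Finset.prod_mul_prod_compl S (fun v => (X v : MvPolynomial (Fin (2*t+1)) K))]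
  exact Ideal.mul_mem_right _ _ h3

lemma sqfreePart_gens {n : ℕ} (I : Ideal (MvPolynomial (Fin n) K)) :
    {m : MvPolynomial (Fin n) K | m ∈ I ∧ ∃ A : Finset (Fin n), m = ∏ v ∈ A, X v}
      = (fun e => monomial e (1:K)) ''
          {e | (∃ A : Finset (Fin n), e = ind A) ∧ monomial e (1:K) ∈ I} := by
  ext m
  constructor
  · rintro ⟨hm, A, rfl⟩
    exact ⟨ind A, ⟨⟨A, rfl⟩, by rwa [← prod_X_eq]⟩, (prod_X_eq A).symm⟩
  · rintro ⟨e, ⟨⟨A, rfl⟩, hmem⟩, rfl⟩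
    exact ⟨hmem, A, (prod_X_eq A).symm⟩

end Aux4

/-- For the star triangle graph with `t` triangles, the product of all
`2t+1` variables is a minimal monomial generator of `I(G)^{t+1}`; in particular
`I(G)^{t+1}` has a minimal monomial generator of degree `2t+1`. -/
theorem starTriangle_ssp_min_gen
    (K : Type) [Field K] (t : ℕ) (ht : 1 ≤ t) :
    IsMinGen K (2 * t + 1)
        (ssp K (2 * t + 1) (edgeIdeal K (2 * t + 1) (starTriangle t)) ((t : ℤ) + 1))
        (∏ v : Fin (2 * t + 1), X v) ∧
      (∏ v : Fin (2 * t + 1), (X v : MvPolynomial (Fin (2 * t + 1)) K)).totalDegree =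
        2 * t + 1 := by
  classical
  have hkey : ∀ k : Fin (2*t+1),
      (monomial (ind (Finset.univ.erase k)) (1:K) : MvPolynomial (Fin (2*t+1)) K) ∉
        ssp K (2*t+1) (edgeIdeal K (2*t+1) (starTriangle t)) ((t:ℤ)+1) := by
    intro k hmem
    obtain ⟨g, hg, hkC⟩ : ∃ g : Fin t → ℕ, ∃ _ : Sel t g, k ∈ Cg t g := by
      by_cases hk0 : (k:ℕ) = 0
      · exact ⟨fun i => 2*(i:ℕ)+1, fun i => Or.inl rfl,
          (mem_Cg (fun i => Or.inl rfl) k).2 (Or.inl hk0)⟩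
      · have hk2 := k.2
        have hg : Sel t (fun i => if (i:ℕ) = ((k:ℕ)-1)/2 then (k:ℕ) else 2*(i:ℕ)+1) := by
          intro i
          show (if (i:ℕ) = ((k:ℕ)-1)/2 then (k:ℕ) else 2*(i:ℕ)+1) = 2*(i:ℕ)+1 ∨
            (if (i:ℕ) = ((k:ℕ)-1)/2 then (k:ℕ) else 2*(i:ℕ)+1) = 2*(i:ℕ)+2
          by_cases hi : (i:ℕ) = ((k:ℕ)-1)/2
          · simp only [if_pos hi]; omega
          · simp only [if_neg hi]; tauto
        refine ⟨_, hg, (mem_Cg hg k).2 (Or.inr ⟨⟨((k:ℕ)-1)/2, by omega⟩, ?_⟩)⟩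
        show (k:ℕ) = if ((⟨((k:ℕ)-1)/2, by omega⟩ : Fin t) : ℕ) = ((k:ℕ)-1)/2 then (k:ℕ)
          else 2*((⟨((k:ℕ)-1)/2, by omega⟩ : Fin t):ℕ)+1
        rw [if_pos rfl]
    set C := Cg t g with hC
    have hmin := spanX_Cg_minimalPrime K ht hg
    rw [ssp, sqfreePart, sqfreePart_gens, mem_ideal_span_monomial_image] at hmem
    obtain ⟨e, he, hle⟩ := hmem (ind (Finset.univ.erase k))
      (by rw [support_monomial, if_neg one_ne_zero]; exact Finset.mem_singleton_self _)
    obtain ⟨⟨A, rfl⟩, hA⟩ := he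
    have hkA : k ∉ A := by
      intro hk
      have h1 := Finsupp.le_def.mp hle k
      rw [ind_apply, ind_apply, if_pos hk, if_neg (by simp)] at h1
      omega
    have hsymb : symbPow K (2*t+1) (edgeIdeal K (2*t+1) (starTriangle t)) ((t:ℤ)+1) ≤
        Ideal.span (X '' ↑C : Set (MvPolynomial (Fin (2*t+1)) K)) ^ (t+1) := by
      rw [symbPow, if_neg (by omega : ¬ ((t:ℤ)+1 ≤ 0)), show ((t:ℤ)+1).toNat = t+1 by omega]
      exact iInf₂_le _ hmin
    have hJ : (monomial (ind A) 1 : MvPolynomial (Fin (2*t+1)) K) ∈ Jdeg K C (t+1) :=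
      spanX_pow_le_Jdeg C (t+1) (hsymb hA)
    have hcard := card_le_of_mem_Jdeg hJ
    have hsub : C ∩ A ⊆ C.erase k := by
      intro v hv
      rcases Finset.mem_inter.1 hv with ⟨h1, h2⟩
      exact Finset.mem_erase.2 ⟨fun h => hkA (h ▸ h2), h1⟩
    have h5 : (C.erase k).card = t := by
      rw [Finset.card_erase_of_mem hkC, card_Cg hg]
      omega
    have h6 := Finset.card_le_card hsub
    omega
  constructor
  · refine ⟨ind Finset.univ, prod_X_eq Finset.univ, ?_, ?_⟩
    · rw [ssp, sqfreePart]
      exact Ideal.subset_span ⟨mem_symbPow_u ht, Finset.univ, rfl⟩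
    · intro k hk
      have heq : ind Finset.univ - Finsupp.single k 1 = ind (Finset.univ.erase k) := by
        ext w
        by_cases hw : w = k
        · subst hw
          simp [Finsupp.tsub_apply, ind_apply, Finsupp.single_apply]
        · simp [Finsupp.tsub_apply, ind_apply, Finsupp.single_apply, hw, Ne.symm hw]
      rw [heq]
      exact hkey k
  · rw [prod_X_eq Finset.univ, totalDegree_monomial _ one_ne_zero]
    rw [Finsupp.sum_fintype _ _ (fun _ => rfl)]
    have hone : ∀ v : Fin (2*t+1), ind Finset.univ v = 1 := fun v => by
      rw [ind_apply, if_pos (Finset.mem_univ v)]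
    simp only [hone]
    rw [Finset.sum_const, Finset.card_univ, Fintype.card_fin, smul_eq_mul, mul_one]
end

section
/- Let G be a finite simple graph and suppose x_i x_j is an edge of G. Then for every integer s with 1 ≤ s ≤ ht(I(G)) − 1, we have (I(G)^{s+1} : x_i x_j) = (I(G − x_j)^{s} : x_i) ∩ (I(G − x_i)^{s} : x_j), where G − x denotes the graph obtained from G by deleting the vertex x and all edges incident to it. -/
open MvPolynomial

noncomputable section

namespace SSPAux
variable (K : Type) [Field K] (n : ℕ)



/-- indicator exponent of a finset -/
noncomputable def ind (A : Finset (Fin n)) : Fin n →₀ ℕ := ∑ v ∈ A, Finsupp.single v 1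

lemma ind_apply (A : Finset (Fin n)) (v : Fin n) : ind n A v = if v ∈ A then 1 else 0 := by
  classical
  simp [ind, Finsupp.finset_sum_apply, Finsupp.single_apply, Finset.sum_ite_eq]

lemma prod_X_eq (A : Finset (Fin n)) :
    (∏ v ∈ A, (X v : MvPolynomial (Fin n) K)) = monomial (ind n A) 1 := by
  classical
  induction A using Finset.induction with
  | empty => simp [ind, monomial_eq]
  | insert _ _ h ih =>
      rw [Finset.prod_insert h, ih, X, monomial_mul, one_mul]
      congr 1
      rw [ind, ind, Finset.sum_insert h]

lemma ind_le_iff (A : Finset (Fin n)) (d : Fin n →₀ ℕ) :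
    ind n A ≤ d ↔ A ⊆ d.support := by
  classical
  rw [Finsupp.le_def]
  constructor
  · intro h v hv
    have := h v
    rw [ind_apply, if_pos hv] at this
    exact Finsupp.mem_support_iff.2 (by omega)
  · intro h v
    rw [ind_apply]
    split
    · next hv => have := Finsupp.mem_support_iff.1 (h hv); omega
    · omega

/-- weighted degree -/
def wdeg (C : Finset (Fin n)) (d : Fin n →₀ ℕ) : ℕ := ∑ v ∈ C, d v

lemma wdeg_ind (C A : Finset (Fin n)) : wdeg n C (ind n A) = (A ∩ C).card := by
  classical
  rw [wdeg]
  have : ∀ v ∈ C, ind n A v = if v ∈ A then 1 else 0 := fun v _ => ind_apply n A v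
  rw [Finset.sum_congr rfl this, Finset.sum_ite_mem]
  rw [Finset.card_eq_sum_ones, Finset.inter_comm]



/-- The ideal of polynomials all whose monomials are divisible by some exponent in T. -/
def divIdeal (T : Set (Fin n →₀ ℕ)) : Ideal (MvPolynomial (Fin n) K) where
  carrier := {p | ∀ d ∈ p.support, ∃ e ∈ T, e ≤ d}
  zero_mem' := by simp
  add_mem' := by
    intro a b ha hb d hd
    rcases Finset.mem_union.1 (MvPolynomial.support_add hd) with h | h
    · exact ha d h
    · exact hb d h
  smul_mem' := by
    classical
    intro c p hp d hd
    rw [smul_eq_mul] at hd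
    obtain ⟨d1, h1, d2, h2, rfl⟩ := Finset.mem_add.1 (MvPolynomial.support_mul c p hd)
    obtain ⟨e, he, hle⟩ := hp d2 h2
    exact ⟨e, he, le_trans hle (by simp)⟩

lemma mem_span_monomials_iff (T : Set (Fin n →₀ ℕ)) (p : MvPolynomial (Fin n) K) :
    p ∈ Ideal.span ((fun e => (monomial e (1 : K))) '' T) ↔
      ∀ d ∈ p.support, ∃ e ∈ T, e ≤ d := by
  classical
  constructor
  · intro hp
    have hle : Ideal.span ((fun e => (monomial e (1 : K))) '' T) ≤ divIdeal K n T := by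
      rw [Ideal.span_le]
      rintro m ⟨e, he, rfl⟩
      intro d hd
      rw [support_monomial, if_neg one_ne_zero, Finset.mem_singleton] at hd
      exact ⟨e, he, hd.ge⟩
    exact hle hp
  · intro h
    rw [← MvPolynomial.support_sum_monomial_coeff p]
    refine Ideal.sum_mem _ ?_
    intro d hd
    obtain ⟨e, he, hle⟩ := h d hd
    have : (monomial d) (coeff d p) = (monomial (d - e)) (coeff d p) * (monomial e) (1 : K) := by
      rw [monomial_mul, mul_one, tsub_add_cancel_of_le hle]
    rw [this]
    exact Ideal.mul_mem_left _ _ (Ideal.subset_span ⟨e, he, rfl⟩)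



def tdeg (e : Fin n →₀ ℕ) : ℕ := ∑ v : Fin n, e v

def PC (C : Finset (Fin n)) : Ideal (MvPolynomial (Fin n) K) :=
  Ideal.span ((fun v => (X v : MvPolynomial (Fin n) K)) '' (C : Set (Fin n)))

lemma tdeg_add (e f : Fin n →₀ ℕ) : tdeg n (e + f) = tdeg n e + tdeg n f := by
  simp [tdeg, Finset.sum_add_distrib]

lemma tdeg_single (v : Fin n) : tdeg n (Finsupp.single v 1) = 1 := by
  classical
  simp [tdeg, Finsupp.single_apply]

lemma PC_pow (C : Finset (Fin n)) (s : ℕ) :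
    PC K n C ^ s =
      Ideal.span ((fun e => (monomial e (1 : K))) ''
        {e | ↑e.support ⊆ (C : Set (Fin n)) ∧ tdeg n e = s}) := by
  classical
  induction s with
  | zero =>
      rw [pow_zero, Ideal.one_eq_top]
      symm
      rw [Ideal.eq_top_iff_one]
      refine Ideal.subset_span ⟨0, ⟨by simp, by simp [tdeg]⟩, by simp [monomial_eq]⟩
  | succ s ih =>
      rw [pow_succ, ih, PC]
      have hX : ((fun v => (X v : MvPolynomial (Fin n) K)) '' (C : Set (Fin n))) =
          (fun e => (monomial e (1 : K))) '' ((fun v => Finsupp.single v 1) '' (C : Set (Fin n))) := by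
        rw [Set.image_image]
        apply Set.image_congr
        intro v _
        rfl
      rw [hX, Ideal.span_mul_span]
      apply le_antisymm
      · rw [Ideal.span_le]
        intro m hm
        rw [Set.mem_mul] at hm
        obtain ⟨t, ⟨e, ⟨hes, het⟩, rfl⟩, u, ⟨w, ⟨v, hv, rfl⟩, rfl⟩, hm⟩ := hm
        subst hm
        rw [monomial_mul, one_mul]
        refine Ideal.subset_span ⟨e + Finsupp.single v 1, ⟨?_, ?_⟩, rfl⟩
        · refine Set.Subset.trans (Finset.coe_subset.2 Finsupp.support_add) ?_
          rw [Finset.coe_union]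
          refine Set.union_subset hes ?_
          rw [Finsupp.support_single_ne_zero v one_ne_zero]
          simpa using hv
        · rw [tdeg_add, tdeg_single, het]
      · rw [Ideal.span_le]
        rintro m ⟨e, ⟨hes, het⟩, rfl⟩
        show (monomial e (1 : K)) ∈ _
        have hne : e ≠ 0 := by
          intro h
          rw [h] at het
          simp [tdeg] at het
        obtain ⟨v, hv⟩ := Finsupp.ne_iff.1 hne
        simp only [Finsupp.coe_zero, Pi.zero_apply] at hv
        have hvs : v ∈ e.support := Finsupp.mem_support_iff.2 hv
        have hvC : v ∈ C := hes hvs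
        have heq : e = (e - Finsupp.single v 1) + Finsupp.single v 1 := by
          ext w
          simp only [Finsupp.add_apply, Finsupp.tsub_apply, Finsupp.single_apply]
          by_cases hw : v = w
          · subst hw; simp; omega
          · simp [hw]
        have hmem : e - Finsupp.single v 1 ∈
            {e | ↑e.support ⊆ (C : Set (Fin n)) ∧ tdeg n e = s} := by
          constructor
          · refine Set.Subset.trans ?_ hes
            exact Finset.coe_subset.2 (Finsupp.support_tsub)
          · have : tdeg n e = tdeg n (e - Finsupp.single v 1) + 1 := by
              conv_lhs => rw [heq]
              rw [tdeg_add, tdeg_single]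
            omega
        have hsplit : (monomial e (1 : K)) =
            monomial (e - Finsupp.single v 1) 1 * monomial (Finsupp.single v 1) 1 := by
          rw [monomial_mul, one_mul, ← heq]
        rw [hsplit]
        refine Ideal.subset_span ?_
        rw [Set.mem_mul]
        exact ⟨_, ⟨e - Finsupp.single v 1, hmem, rfl⟩, _,
          ⟨Finsupp.single v 1, ⟨v, hvC, rfl⟩, rfl⟩, rfl⟩


lemma exists_le_of_wdeg (s : ℕ) (C : Finset (Fin n)) (g : Fin n →₀ ℕ)
    (h : s ≤ ∑ v ∈ C, g v) :
    ∃ e : Fin n →₀ ℕ, e ≤ g ∧ ↑e.support ⊆ (C : Set (Fin n)) ∧ tdeg n e = s := by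
  classical
  induction s generalizing g with
  | zero => exact ⟨0, zero_le, by simp, by simp [tdeg]⟩
  | succ s ih =>
      have hpos : 0 < ∑ v ∈ C, g v := by omega
      have : ∃ v ∈ C, g v ≠ 0 := by
        by_contra hc
        push_neg at hc
        rw [Finset.sum_eq_zero hc] at hpos
        omega
      obtain ⟨v, hvC, hv⟩ := this
      have heq : g = (g - Finsupp.single v 1) + Finsupp.single v 1 := by
        ext w
        simp only [Finsupp.add_apply, Finsupp.tsub_apply, Finsupp.single_apply]
        by_cases hw : v = w
        · subst hw; simp; omega
        · simp [hw]
      have h2 : ∑ w ∈ C, (Finsupp.single v 1 : Fin n →₀ ℕ) w = 1 := by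
        rw [Finset.sum_eq_single_of_mem v hvC
          (fun w _ hw => Finsupp.single_eq_of_ne' (Ne.symm hw)), Finsupp.single_eq_same]
      have h1 : ∑ w ∈ C, g w
          = (∑ w ∈ C, ((g - Finsupp.single v 1 : Fin n →₀ ℕ)) w)
            + ∑ w ∈ C, (Finsupp.single v 1 : Fin n →₀ ℕ) w := by
        rw [← Finset.sum_add_distrib]
        refine Finset.sum_congr rfl fun w _ => ?_
        conv_lhs => rw [heq]
        rfl
      obtain ⟨e, hle, hsupp, hdeg⟩ := ih (g - Finsupp.single v 1) (by omega : s ≤ ∑ w ∈ C, ((g - Finsupp.single v 1 : Fin n →₀ ℕ)) w)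
      refine ⟨e + Finsupp.single v 1, ?_, ?_, ?_⟩
      · conv_rhs => rw [heq]
        exact add_le_add_left hle _
      · refine Set.Subset.trans (Finset.coe_subset.2 Finsupp.support_add) ?_
        rw [Finset.coe_union]
        refine Set.union_subset hsupp ?_
        rw [Finsupp.support_single_ne_zero v one_ne_zero]
        simpa using hvC
      · rw [show tdeg n (e + Finsupp.single v 1) = tdeg n e + tdeg n (Finsupp.single v 1) by
          simp [tdeg, Finset.sum_add_distrib]]
        have : tdeg n (Finsupp.single v 1) = 1 := by
          classical
          simp [tdeg, Finsupp.single_apply]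
        omega



lemma mem_PC_pow_iff (C : Finset (Fin n)) (s : ℕ) (p : MvPolynomial (Fin n) K) :
    p ∈ PC K n C ^ s ↔ ∀ d ∈ p.support, s ≤ ∑ v ∈ C, d v := by
  rw [PC_pow, mem_span_monomials_iff]
  constructor
  · intro h d hd
    obtain ⟨e, ⟨hsupp, hdeg⟩, hle⟩ := h d hd
    have h1 : tdeg n e = ∑ v ∈ C, e v := by
      rw [tdeg]
      symm
      apply Finset.sum_subset (Finset.subset_univ C)
      intro x _ hx
      by_contra h0
      exact hx (Finset.mem_coe.1 (hsupp (Finset.mem_coe.2 (Finsupp.mem_support_iff.2 h0))))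
    calc s = tdeg n e := hdeg.symm
    _ = ∑ v ∈ C, e v := h1
    _ ≤ ∑ v ∈ C, d v := Finset.sum_le_sum fun v _ => Finsupp.le_def.1 hle v
  · intro h d hd
    obtain ⟨e, hle, hsupp, hdeg⟩ := exists_le_of_wdeg n s C d (h d hd)
    exact ⟨e, ⟨hsupp, hdeg⟩, hle⟩

lemma PC_prime (C : Finset (Fin n)) : (PC K n C).IsPrime := by
  classical
  have hker : PC K n C = RingHom.ker
      (MvPolynomial.aeval (fun v : Fin n =>
        if v ∈ C then (0 : MvPolynomial (Fin n) K) else X v) :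
        MvPolynomial (Fin n) K →ₐ[K] MvPolynomial (Fin n) K) := by
    apply le_antisymm
    · rw [PC, Ideal.span_le]
      rintro m ⟨v, hv, rfl⟩
      rw [SetLike.mem_coe, RingHom.mem_ker]
      simp [Finset.mem_coe.1 hv]
    · intro f hf
      rw [RingHom.mem_ker] at hf
      set φ := (MvPolynomial.aeval (fun v : Fin n =>
          if v ∈ C then (0 : MvPolynomial (Fin n) K) else X v) :
          MvPolynomial (Fin n) K →ₐ[K] MvPolynomial (Fin n) K) with hφ
      have key : ∀ g : MvPolynomial (Fin n) K, g - φ g ∈ PC K n C := by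
        intro g
        induction g using MvPolynomial.induction_on with
        | C a => simp [hφ]
        | add p q hp hq =>
            rw [map_add]
            have : p + q - (φ p + φ q) = (p - φ p) + (q - φ q) := by ring
            rw [this]
            exact Ideal.add_mem _ hp hq
        | mul_X p i hp =>
            rw [map_mul, hφ, aeval_X, ← hφ]
            by_cases hi : i ∈ C
            · rw [if_pos hi, mul_zero, sub_zero]
              exact Ideal.mul_mem_left _ _ (Ideal.subset_span ⟨i, hi, rfl⟩)
            · rw [if_neg hi]
              have : p * X i - φ p * X i = (p - φ p) * X i := by ring
              rw [this]
              exact Ideal.mul_mem_right _ _ hp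
      have := key f
      rwa [hf, sub_zero] at this
  rw [hker]
  exact RingHom.ker_isPrime _

def Cover (H : SimpleGraph (Fin n)) (C : Finset (Fin n)) : Prop :=
  ∀ v w, H.Adj v w → v ∈ C ∨ w ∈ C

lemma sum_ind (C A : Finset (Fin n)) : (∑ v ∈ C, ind n A v) = (A ∩ C).card :=
  wdeg_ind n C A

lemma edgeIdeal_le_PC (H : SimpleGraph (Fin n)) (C : Finset (Fin n)) (hC : Cover n H C) :
    edgeIdeal K n H ≤ PC K n C := by
  rw [edgeIdeal, Ideal.span_le]
  rintro m ⟨v, w, hvw, rfl⟩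
  rcases hC v w hvw with h | h
  · exact Ideal.mul_mem_right _ _ (Ideal.subset_span ⟨v, h, rfl⟩)
  · exact Ideal.mul_mem_left _ _ (Ideal.subset_span ⟨w, h, rfl⟩)

lemma mem_symbPow_iff (H : SimpleGraph (Fin n)) (s : ℕ) (hs : 1 ≤ s)
    (p : MvPolynomial (Fin n) K) :
    p ∈ symbPow K n (edgeIdeal K n H) (s : ℤ) ↔
      ∀ C : Finset (Fin n), Cover n H C → ∀ d ∈ p.support, s ≤ ∑ v ∈ C, d v := by
  rw [symbPow, if_neg (by omega : ¬((s : ℤ) ≤ 0)), Int.toNat_natCast]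
  constructor
  · intro hp C hC
    haveI := PC_prime K n C
    obtain ⟨q, hq, hqle⟩ := Ideal.exists_minimalPrimes_le (edgeIdeal_le_PC K n H C hC)
    have h1 : p ∈ q ^ s := Ideal.mem_iInf.1 (Ideal.mem_iInf.1 hp q) hq
    exact (mem_PC_pow_iff K n C s p).1 (Ideal.pow_right_mono hqle s h1)
  · intro h
    rw [Ideal.mem_iInf]
    intro q
    rw [Ideal.mem_iInf]
    intro hq
    classical
    set C : Finset (Fin n) := Finset.univ.filter (fun v => X v ∈ q) with hCdef
    have hqp : q.IsPrime := hq.1.1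
    have hcov : Cover n H C := by
      intro v w hvw
      have hm : (X v : MvPolynomial (Fin n) K) * X w ∈ q :=
        hq.1.2 (Ideal.subset_span ⟨v, w, hvw, rfl⟩)
      rcases hqp.mem_or_mem hm with h' | h'
      · left; simp [hCdef, h']
      · right; simp [hCdef, h']
    have hle : PC K n C ≤ q := by
      rw [PC, Ideal.span_le]
      rintro m ⟨v, hv, rfl⟩
      have hv' : v ∈ C := Finset.mem_coe.1 hv
      rw [hCdef, Finset.mem_filter] at hv'
      exact hv'.2
    exact Ideal.pow_right_mono hle s ((mem_PC_pow_iff K n C s p).2 (h C hcov))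

lemma mem_ssp_iff (H : SimpleGraph (Fin n)) (s : ℕ) (hs : 1 ≤ s)
    (p : MvPolynomial (Fin n) K) :
    p ∈ ssp K n (edgeIdeal K n H) (s : ℤ) ↔
      ∀ d ∈ p.support, ∃ A : Finset (Fin n),
        (∀ C : Finset (Fin n), Cover n H C → s ≤ (A ∩ C).card) ∧ A ⊆ d.support := by
  classical
  rw [ssp, sqfreePart]
  have hset : {m : MvPolynomial (Fin n) K | m ∈ symbPow K n (edgeIdeal K n H) ((s : ℕ) : ℤ) ∧
      ∃ A : Finset (Fin n), m = ∏ v ∈ A, X v} =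
      (fun e => monomial e (1 : K)) '' {e | ∃ A : Finset (Fin n), e = ind n A ∧
        (∀ C : Finset (Fin n), Cover n H C → s ≤ (A ∩ C).card)} := by
    ext m
    constructor
    · rintro ⟨hm, A, rfl⟩
      refine ⟨ind n A, ⟨A, rfl, ?_⟩, (prod_X_eq K n A).symm⟩
      intro C hC
      rw [prod_X_eq] at hm
      have h1 := (mem_symbPow_iff K n H s hs _).1 hm C hC (ind n A) (by
        rw [support_monomial, if_neg one_ne_zero]
        exact Finset.mem_singleton_self _)
      rwa [sum_ind] at h1
    · rintro ⟨e, ⟨A, rfl, hA⟩, rfl⟩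
      refine ⟨?_, A, (prod_X_eq K n A).symm⟩
      rw [mem_symbPow_iff K n H s hs]
      intro C hC d hd
      rw [support_monomial, if_neg one_ne_zero, Finset.mem_singleton] at hd
      subst hd
      rw [sum_ind]
      exact hA C hC
  rw [hset, mem_span_monomials_iff]
  constructor
  · intro h d hd
    obtain ⟨e, ⟨A, rfl, hA⟩, hle⟩ := h d hd
    exact ⟨A, hA, (ind_le_iff n A d).1 hle⟩
  · intro h d hd
    obtain ⟨A, hA, hsub⟩ := h d hd
    exact ⟨ind n A, ⟨A, rfl, hA⟩, (ind_le_iff n A d).2 hsub⟩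

lemma cover_insert (H : SimpleGraph (Fin n)) (x : Fin n) (C : Finset (Fin n))
    (hC : Cover n (delVerts n H {x}) C) : Cover n H (insert x C) := by
  intro v w hvw
  by_cases hv : v = x
  · left; exact hv ▸ Finset.mem_insert_self x C
  by_cases hw : w = x
  · right; exact hw ▸ Finset.mem_insert_self x C
  rcases hC v w ⟨hvw, by simpa using hv, by simpa using hw⟩ with h | h
  · exact Or.inl (Finset.mem_insert_of_mem h)
  · exact Or.inr (Finset.mem_insert_of_mem h)

lemma cover_erase (H : SimpleGraph (Fin n)) (x : Fin n) (C : Finset (Fin n))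
    (hC : Cover n H C) : Cover n (delVerts n H {x}) (C.erase x) := by
  rintro v w ⟨hvw, hv, hw⟩
  rcases hC v w hvw with h | h
  · exact Or.inl (Finset.mem_erase.2 ⟨by simpa using hv, h⟩)
  · exact Or.inr (Finset.mem_erase.2 ⟨by simpa using hw, h⟩)

lemma key (G : SimpleGraph (Fin n)) (xi xj : Fin n) (hadj : G.Adj xi xj) (s : ℕ)
    (S : Finset (Fin n)) :
    (∃ A : Finset (Fin n), (∀ C : Finset (Fin n), Cover n G C → s + 1 ≤ (A ∩ C).card) ∧
        A ⊆ insert xj (insert xi S)) ↔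
      ((∃ A1 : Finset (Fin n),
          (∀ C : Finset (Fin n), Cover n (delVerts n G {xj}) C → s ≤ (A1 ∩ C).card) ∧
          A1 ⊆ insert xi S) ∧
       (∃ A2 : Finset (Fin n),
          (∀ C : Finset (Fin n), Cover n (delVerts n G {xi}) C → s ≤ (A2 ∩ C).card) ∧
          A2 ⊆ insert xj S)) := by
  classical
  constructor
  · rintro ⟨A, hA, hsub⟩
    constructor
    · refine ⟨A.erase xj, fun C hC => ?_, fun v hv => ?_⟩
      · have h1 := hA (insert xj C) (cover_insert n G xj C hC)
        have h2 : A ∩ insert xj C ⊆ insert xj (A.erase xj ∩ C) := by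
          intro v hv
          rw [Finset.mem_inter] at hv
          by_cases hvj : v = xj
          · exact hvj ▸ Finset.mem_insert_self _ _
          · refine Finset.mem_insert_of_mem (Finset.mem_inter.2 ⟨Finset.mem_erase.2 ⟨hvj, hv.1⟩, ?_⟩)
            rcases Finset.mem_insert.1 hv.2 with h | h
            · exact absurd h hvj
            · exact h
        have h3 := Finset.card_le_card h2
        have h4 := Finset.card_insert_le xj (A.erase xj ∩ C)
        omega
      · rw [Finset.mem_erase] at hv
        rcases Finset.mem_insert.1 (hsub hv.2) with h | h
        · exact absurd h hv.1
        · exact h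
    · refine ⟨A.erase xi, fun C hC => ?_, fun v hv => ?_⟩
      · have h1 := hA (insert xi C) (cover_insert n G xi C hC)
        have h2 : A ∩ insert xi C ⊆ insert xi (A.erase xi ∩ C) := by
          intro v hv
          rw [Finset.mem_inter] at hv
          by_cases hvi : v = xi
          · exact hvi ▸ Finset.mem_insert_self _ _
          · refine Finset.mem_insert_of_mem (Finset.mem_inter.2 ⟨Finset.mem_erase.2 ⟨hvi, hv.1⟩, ?_⟩)
            rcases Finset.mem_insert.1 hv.2 with h | h
            · exact absurd h hvi
            · exact h
        have h3 := Finset.card_le_card h2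
        have h4 := Finset.card_insert_le xi (A.erase xi ∩ C)
        omega
      · rw [Finset.mem_erase] at hv
        rcases Finset.mem_insert.1 (hsub hv.2) with h | h
        · exact h ▸ Finset.mem_insert_self xj S
        · rcases Finset.mem_insert.1 h with h' | h'
          · exact absurd h' hv.1
          · exact Finset.mem_insert_of_mem h'
  · rintro ⟨⟨A1, hA1, hsub1⟩, ⟨A2, hA2, hsub2⟩⟩
    refine ⟨insert xi (insert xj (A1 ∪ A2)), fun C hC => ?_, fun v hv => ?_⟩
    · rcases hC xi xj hadj with hmem | hmem
      · have h1 := hA2 (C.erase xi) (cover_erase n G xi C hC)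
        have h2 : insert xi (A2 ∩ C.erase xi) ⊆ insert xi (insert xj (A1 ∪ A2)) ∩ C := by
          intro v hv
          rcases Finset.mem_insert.1 hv with h | h
          · subst h
            exact Finset.mem_inter.2 ⟨Finset.mem_insert_self _ _, hmem⟩
          · rw [Finset.mem_inter] at h
            refine Finset.mem_inter.2 ⟨?_, Finset.mem_of_mem_erase h.2⟩
            exact Finset.mem_insert_of_mem (Finset.mem_insert_of_mem (Finset.mem_union_right _ h.1))
        have h3 := Finset.card_le_card h2
        have h4 : xi ∉ A2 ∩ C.erase xi := by
          rw [Finset.mem_inter]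
          rintro ⟨-, h⟩
          exact (Finset.mem_erase.1 h).1 rfl
        rw [Finset.card_insert_of_notMem h4] at h3
        omega
      · have h1 := hA1 (C.erase xj) (cover_erase n G xj C hC)
        have h2 : insert xj (A1 ∩ C.erase xj) ⊆ insert xi (insert xj (A1 ∪ A2)) ∩ C := by
          intro v hv
          rcases Finset.mem_insert.1 hv with h | h
          · subst h
            exact Finset.mem_inter.2
              ⟨Finset.mem_insert_of_mem (Finset.mem_insert_self _ _), hmem⟩
          · rw [Finset.mem_inter] at h
            refine Finset.mem_inter.2 ⟨?_, Finset.mem_of_mem_erase h.2⟩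
            exact Finset.mem_insert_of_mem (Finset.mem_insert_of_mem (Finset.mem_union_left _ h.1))
        have h3 := Finset.card_le_card h2
        have h4 : xj ∉ A1 ∩ C.erase xj := by
          rw [Finset.mem_inter]
          rintro ⟨-, h⟩
          exact (Finset.mem_erase.1 h).1 rfl
        rw [Finset.card_insert_of_notMem h4] at h3
        omega
    · rcases Finset.mem_insert.1 hv with h | h
      · exact h ▸ Finset.mem_insert_of_mem (Finset.mem_insert_self _ _)
      rcases Finset.mem_insert.1 h with h' | h'
      · exact h' ▸ Finset.mem_insert_self _ _
      rcases Finset.mem_union.1 h' with h'' | h''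
      · rcases Finset.mem_insert.1 (hsub1 h'') with h3 | h3
        · exact h3 ▸ Finset.mem_insert_of_mem (Finset.mem_insert_self _ _)
        · exact Finset.mem_insert_of_mem (Finset.mem_insert_of_mem h3)
      · rcases Finset.mem_insert.1 (hsub2 h'') with h3 | h3
        · exact h3 ▸ Finset.mem_insert_self _ _
        · exact Finset.mem_insert_of_mem (Finset.mem_insert_of_mem h3)

lemma support_add_single (c : Fin n →₀ ℕ) (i : Fin n) :
    (c + Finsupp.single i 1).support = insert i c.support := by
  classical
  ext w
  rw [Finsupp.mem_support_iff, Finset.mem_insert, Finsupp.mem_support_iff,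
    Finsupp.add_apply, Finsupp.single_apply]
  rcases eq_or_ne i w with h | h
  · subst h; simp
  · simp [h, Ne.symm h]

lemma forall_support_mul_X (p : MvPolynomial (Fin n) K) (i : Fin n)
    (P : (Fin n →₀ ℕ) → Prop) :
    (∀ d ∈ (p * X i).support, P d) ↔
      ∀ c ∈ p.support, P (c + Finsupp.single i 1) := by
  rw [support_mul_X]
  constructor
  · intro h c hc
    exact h _ (Finset.mem_map_of_mem _ hc)
  · intro h d hd
    obtain ⟨c, hc, rfl⟩ := Finset.mem_map.1 hd
    exact h c hc

end SSPAux
end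

/-- If `x_i x_j` is an edge of `G` and `1 ≤ s ≤ ht I(G) - 1`, then
`(I(G)^{s+1} : x_i x_j) = (I(G - x_j)^{s} : x_i) ∩ (I(G - x_i)^{s} : x_j)`. -/
theorem ssp_colon_edge_eq_inf
    (K : Type) [Field K] (n : ℕ) (G : SimpleGraph (Fin n)) (xi xj : Fin n)
    (hadj : G.Adj xi xj) (s : ℕ) (hs1 : 1 ≤ s)
    (hs2 : (s : ℕ∞) + 1 ≤ heightI K n (edgeIdeal K n G)) :
    colonOf K n (ssp K n (edgeIdeal K n G) ((s : ℤ) + 1))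
        ((X xi : MvPolynomial (Fin n) K) * X xj) =
      colonOf K n (ssp K n (edgeIdeal K n (delVerts n G {xj})) (s : ℤ)) (X xi) ⊓
        colonOf K n (ssp K n (edgeIdeal K n (delVerts n G {xi})) (s : ℤ)) (X xj) := by
  classical
  ext f
  rw [Ideal.mem_inf, colonOf, colonOf, colonOf, Ideal.mem_colon_span_singleton,
    Ideal.mem_colon_span_singleton, Ideal.mem_colon_span_singleton]
  have hcast : ((s : ℤ) + 1) = (((s + 1 : ℕ)) : ℤ) := by push_cast; ring
  rw [hcast]
  have hxx : f * (X xi * X xj) = (f * X xi) * X xj := by ring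
  rw [hxx, SSPAux.mem_ssp_iff K n G (s + 1) (by omega),
    SSPAux.mem_ssp_iff K n _ s hs1, SSPAux.mem_ssp_iff K n _ s hs1]
  simp only [SSPAux.forall_support_mul_X]
  rw [← forall₂_and]
  refine forall₂_congr fun c hc => ?_
  rw [SSPAux.support_add_single, SSPAux.support_add_single, SSPAux.support_add_single]
  exact SSPAux.key n G xi xj hadj s c.support
end
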